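/- arXiv:0803.2351 — 8 statements merged into one kernel-verified Lean document; each statement's English description precedes it below -/
import Mathlib

section
/- The set V of very well approximable numbers, i.e., the set of x ∈ [0,1) such that for some ε > 0 the inequality ‖q·x‖ < q^{-(1+ε)} holds for infinitely many q ∈ ℕ, has Lebesgue measure zero. -/
open MeasureTheory Set

theorem borel_very_well_approximable_null :
    volume {x : ℝ | x ∈ Ico (0:ℝ) 1 ∧ ∃ ε : ℝ, 0 < ε ∧
      {q : ℕ | 0 < q ∧
        |(q : ℝ) * x - round ((q : ℝ) * x)| < (q : ℝ) ^ (-(1 + ε))}.Infinite} = 0 := by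
  apply measure_mono_null
    (t := Set.range ((↑) : ℚ → ℝ) ∪ ⋃ (p : ℝ) (_ : 2 < p), {x : ℝ | LiouvilleWith p x})
  · rintro x ⟨-, ε, hε, hinf⟩
    by_cases hx : ∃ r : ℚ, (r : ℝ) = x
    · exact Or.inl hx
    · right
      refine mem_iUnion₂.2 ⟨2 + ε, by linarith, 1, ?_⟩
      rw [Nat.frequently_atTop_iff_infinite]
      refine hinf.mono ?_
      rintro q ⟨hq, habs⟩
      have hq0 : (0 : ℝ) < q := Nat.cast_pos.2 hq
      have hq1 : (1 : ℝ) ≤ q := Nat.one_le_cast.2 hq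
      refine ⟨round ((q : ℝ) * x), ?_, ?_⟩
      · intro hxe
        exact hx ⟨(round ((q : ℝ) * x) : ℚ) / (q : ℚ), by push_cast; exact hxe.symm⟩
      · have key : x - (round ((q : ℝ) * x) : ℝ) / q
            = ((q : ℝ) * x - round ((q : ℝ) * x)) / q := by
          field_simp
        rw [key, abs_div, abs_of_pos hq0]
        rw [div_lt_iff₀ hq0]
        calc |(q : ℝ) * x - round ((q : ℝ) * x)| < (q : ℝ) ^ (-(1 + ε)) := habs
          _ = 1 / (q : ℝ) ^ (2 + ε) * q := by
            rw [show (2:ℝ) + ε = (1 + ε) + 1 by ring, Real.rpow_add hq0, Real.rpow_one,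
              Real.rpow_neg hq0.le]
            field_simp
  · refine measure_union_null ?_ ?_
    · exact (Set.countable_range _).measure_zero _
    · exact volume_iUnion_setOf_liouvilleWith
end

section
/- Let n ≥ 1, m ≥ 1 and ψ : ℕ → [0,∞) with ∑_{r=1}^∞ r^{n-1}·ψ(r)^m < ∞. Then the set of n×m real matrices X ∈ [0,1)^{nm} such that max_{1≤j≤m} ‖∑_{i=1}^n q_i X_{ij}‖ < ψ(max_i |q_i|) for infinitely many nonzero q ∈ ℤ^n has nm-dimensional Lebesgue measure zero. -/
open MeasureTheory Set

open Filter
open scoped ENNReal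

lemma groshev_oneDim (a : ℤ) (ha : a ≠ 0) (c ε : ℝ) (hε : 0 ≤ ε) :
    volume {t : ℝ | t ∈ Ico (0:ℝ) 1 ∧ ∃ k : ℤ, |(a:ℝ) * t + c - k| < ε} ≤
      ENNReal.ofReal (6 * ε) := by
  rcases le_or_gt (1:ℝ) (2*ε) with h1 | h1
  · calc volume {t : ℝ | t ∈ Ico (0:ℝ) 1 ∧ ∃ k : ℤ, |(a:ℝ) * t + c - k| < ε}
        ≤ volume (Ico (0:ℝ) 1) := measure_mono (fun t ht => ht.1)
      _ = ENNReal.ofReal 1 := by simp [Real.volume_Ico]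
      _ ≤ ENNReal.ofReal (6*ε) := ENNReal.ofReal_le_ofReal (by linarith)
  · have haZ : (1:ℤ) ≤ |a| := Int.one_le_abs ha
    have haR : (1:ℝ) ≤ |(a:ℝ)| := by
      calc (1:ℝ) ≤ ((|a| : ℤ) : ℝ) := by exact_mod_cast haZ
        _ = |(a:ℝ)| := by push_cast; rfl
    have haR0 : (a:ℝ) ≠ 0 := Int.cast_ne_zero.mpr ha
    set M : ℝ := c + max 0 (a:ℝ) with hM
    set m : ℝ := c + min 0 (a:ℝ) with hm
    have hMm : M - m = |(a:ℝ)| := by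
      rcases le_or_gt 0 (a:ℝ) with h | h
      · simp only [hM, hm, max_eq_right h, min_eq_left h, abs_of_nonneg h]; ring
      · simp only [hM, hm, max_eq_left h.le, min_eq_right h.le, abs_of_neg h]; ring
    set K : Finset ℤ := Finset.Icc ⌈m - ε⌉ ⌊M + ε⌋ with hK
    have hsub : {t : ℝ | t ∈ Ico (0:ℝ) 1 ∧ ∃ k : ℤ, |(a:ℝ) * t + c - k| < ε} ⊆
        ⋃ k ∈ K, ((fun t => (a:ℝ) * t) ⁻¹' Ioo ((k:ℝ) - c - ε) ((k:ℝ) - c + ε)) := by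
      rintro t ⟨⟨ht0, ht1⟩, k, hk⟩
      have hat : min 0 (a:ℝ) ≤ (a:ℝ) * t ∧ (a:ℝ) * t ≤ max 0 (a:ℝ) := by
        rcases le_or_gt 0 (a:ℝ) with h | h
        · exact ⟨le_trans (min_le_left _ _) (mul_nonneg h ht0),
            le_trans (by nlinarith) (le_max_right _ _)⟩
        · exact ⟨le_trans (min_le_right _ _) (by nlinarith),
            le_trans (by nlinarith) (le_max_left _ _)⟩
      rw [abs_lt] at hk
      have hkK : k ∈ K := by
        rw [hK, Finset.mem_Icc]
        refine ⟨Int.ceil_le.mpr ?_, Int.le_floor.mpr ?_⟩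
        · simp only [hm] at *; linarith [hat.1]
        · simp only [hM] at *; linarith [hat.2]
      refine mem_biUnion hkK ?_
      simp only [mem_preimage, mem_Ioo]
      constructor <;> linarith
    calc volume {t : ℝ | t ∈ Ico (0:ℝ) 1 ∧ ∃ k : ℤ, |(a:ℝ) * t + c - k| < ε}
        ≤ ∑ k ∈ K, volume ((fun t => (a:ℝ) * t) ⁻¹' Ioo ((k:ℝ) - c - ε) ((k:ℝ) - c + ε)) :=
          le_trans (measure_mono hsub) (measure_biUnion_finset_le _ _)
      _ = ∑ _k ∈ K, ENNReal.ofReal ( |(a:ℝ)⁻¹| ) * ENNReal.ofReal (2*ε) := by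
          refine Finset.sum_congr rfl fun k _ => ?_
          rw [Real.volume_preimage_mul_left haR0, Real.volume_Ioo]
          congr 1
          ring_nf
      _ = (K.card : ℝ≥0∞) * (ENNReal.ofReal ( |(a:ℝ)⁻¹| ) * ENNReal.ofReal (2*ε)) := by
          rw [Finset.sum_const, nsmul_eq_mul]
      _ ≤ ENNReal.ofReal (|(a:ℝ)| + 2) * (ENNReal.ofReal ( |(a:ℝ)⁻¹| ) * ENNReal.ofReal (2*ε)) := by
          gcongr
          rw [← ENNReal.ofReal_natCast]
          refine ENNReal.ofReal_le_ofReal ?_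
          have hcard : K.card = (⌊M + ε⌋ + 1 - ⌈m - ε⌉).toNat := Int.card_Icc _ _
          rcases le_or_gt (⌊M + ε⌋ + 1 - ⌈m - ε⌉) 0 with h | h
          · rw [hcard, Int.toNat_of_nonpos h]; push_cast; linarith
          · have hc : ((K.card : ℤ) : ℝ) = ((⌊M + ε⌋ + 1 - ⌈m - ε⌉ : ℤ) : ℝ) := by
              rw [hcard]; norm_cast; rw [Int.toNat_of_nonneg h.le]
            push_cast at hc
            have h2 := Int.floor_le (M + ε)
            have h3 := Int.le_ceil (m - ε)
            push_cast
            rw [hc]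
            linarith [hMm]
      _ ≤ ENNReal.ofReal (6 * ε) := by
          rw [← ENNReal.ofReal_mul (by positivity), ← ENNReal.ofReal_mul (by positivity)]
          refine ENNReal.ofReal_le_ofReal ?_
          rw [abs_inv]
          have hpos : (0:ℝ) < |(a:ℝ)| := by linarith
          have hinv : |(a:ℝ)| * |(a:ℝ)|⁻¹ = 1 := mul_inv_cancel₀ (ne_of_gt hpos)
          have hinvnn : (0:ℝ) ≤ |(a:ℝ)|⁻¹ := inv_nonneg.mpr hpos.le
          have hinvle : |(a:ℝ)|⁻¹ ≤ 1 := by nlinarith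
          nlinarith


lemma groshev_box_meas (N M : ℕ) :
    MeasurableSet {Y : Fin N → Fin M → ℝ | ∀ i j, Y i j ∈ Ico (0:ℝ) 1} := by
  have h : {Y : Fin N → Fin M → ℝ | ∀ i j, Y i j ∈ Ico (0:ℝ) 1}
      = ⋂ i, ⋂ j, (fun Y : Fin N → Fin M → ℝ => Y i j) ⁻¹' Ico (0:ℝ) 1 := by
    ext Y; simp
  rw [h]
  exact MeasurableSet.iInter fun i => MeasurableSet.iInter fun j =>
    ((measurable_pi_apply j).comp (measurable_pi_apply i)) measurableSet_Ico

lemma groshev_box_vol (N M : ℕ) :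
    volume {Y : Fin N → Fin M → ℝ | ∀ i j, Y i j ∈ Ico (0:ℝ) 1} = 1 := by
  have h : {Y : Fin N → Fin M → ℝ | ∀ i j, Y i j ∈ Ico (0:ℝ) 1}
      = univ.pi (fun _ : Fin N => univ.pi fun _ : Fin M => Ico (0:ℝ) 1) := by
    ext Y; simp [Set.mem_pi]
  rw [h, volume_pi_pi]
  simp [volume_pi_pi, Real.volume_Ico]

lemma groshev_meas (N M : ℕ) (q : Fin N → ℤ) (ε : ℝ) :
    MeasurableSet {X : Fin N → Fin M → ℝ | (∀ i j, X i j ∈ Ico (0:ℝ) 1) ∧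
      ∀ j, ∃ k : ℤ, |(∑ i, (q i : ℝ) * X i j) - k| < ε} := by
  have h2 : MeasurableSet {X : Fin N → Fin M → ℝ | ∀ j, ∃ k : ℤ,
      |(∑ i, (q i : ℝ) * X i j) - k| < ε} := by
    have h : {X : Fin N → Fin M → ℝ | ∀ j, ∃ k : ℤ, |(∑ i, (q i : ℝ) * X i j) - k| < ε}
        = ⋂ j, ⋃ k : ℤ, (fun X : Fin N → Fin M → ℝ => (∑ i, (q i : ℝ) * X i j) - k) ⁻¹' Ioo (-ε) ε := by
      ext X; simp [abs_lt, mem_preimage, and_comm]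
    rw [h]
    refine MeasurableSet.iInter fun j => MeasurableSet.iUnion fun k => ?_
    have hmeas : Measurable fun X : Fin N → Fin M → ℝ => (∑ i, (q i : ℝ) * X i j) - (k:ℝ) := by
      refine Measurable.sub ?_ measurable_const
      exact Finset.measurable_sum _ fun i _ =>
        (measurable_const.mul ((measurable_pi_apply j).comp (measurable_pi_apply i)))
    exact hmeas measurableSet_Ioo
  exact (groshev_box_meas N M).inter h2

lemma groshev_cell_bound (n' M : ℕ) (q : Fin (n'+1) → ℤ) (i0 : Fin (n'+1)) (hq : q i0 ≠ 0)
    (ε : ℝ) (hε : 0 ≤ ε) :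
    volume {X : Fin (n'+1) → Fin M → ℝ | (∀ i j, X i j ∈ Ico (0:ℝ) 1) ∧
      ∀ j, ∃ k : ℤ, |(∑ i, (q i : ℝ) * X i j) - k| < ε} ≤ ENNReal.ofReal (6*ε) ^ M := by
  set S := {X : Fin (n'+1) → Fin M → ℝ | (∀ i j, X i j ∈ Ico (0:ℝ) 1) ∧
      ∀ j, ∃ k : ℤ, |(∑ i, (q i : ℝ) * X i j) - k| < ε} with hS
  have hSm : MeasurableSet S := groshev_meas _ _ q ε
  set e := MeasurableEquiv.piFinSuccAbove (fun _ : Fin (n'+1) => Fin M → ℝ) i0 with he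
  have hmp : MeasurePreserving e.symm
      ((volume : Measure (Fin M → ℝ)).prod (Measure.pi fun _ : Fin n' => (volume : Measure (Fin M → ℝ))))
      (Measure.pi fun _ : Fin (n'+1) => (volume : Measure (Fin M → ℝ))) :=
    (measurePreserving_piFinSuccAbove (fun _ : Fin (n'+1) => (volume : Measure (Fin M → ℝ))) i0).symm e
  have key : volume S
      = ((volume : Measure (Fin M → ℝ)).prod (Measure.pi fun _ : Fin n' => (volume : Measure (Fin M → ℝ))))
        (e.symm ⁻¹' S) := by
    rw [hmp.measure_preimage hSm.nullMeasurableSet, volume_pi]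
  rw [key, Measure.prod_apply_symm (e.symm.measurable hSm)]
  have hbound : ∀ Y : Fin n' → Fin M → ℝ,
      volume ((fun v => (v, Y)) ⁻¹' (e.symm ⁻¹' S))
        ≤ {Y : Fin n' → Fin M → ℝ | ∀ i j, Y i j ∈ Ico (0:ℝ) 1}.indicator
            (fun _ => ENNReal.ofReal (6*ε) ^ M) Y := by
    intro Y
    have hins : ∀ v : Fin M → ℝ, e.symm (v, Y) = i0.insertNth v Y := by
      intro v
      simp [he, MeasurableEquiv.piFinSuccAbove_symm_apply, Fin.insertNthEquiv]
    by_cases hY : ∀ i j, Y i j ∈ Ico (0:ℝ) 1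
    · rw [indicator_of_mem (show Y ∈ {Y : Fin n' → Fin M → ℝ | ∀ i j, Y i j ∈ Ico (0:ℝ) 1} from hY)]
      have hsub : ((fun v => (v, Y)) ⁻¹' (e.symm ⁻¹' S)) ⊆
          univ.pi (fun j : Fin M => {t : ℝ | t ∈ Ico (0:ℝ) 1 ∧ ∃ k : ℤ,
            |(q i0 : ℝ) * t + (∑ i', (q (i0.succAbove i') : ℝ) * Y i' j) - k| < ε}) := by
        intro v hv
        simp only [mem_preimage, hins v, hS, mem_setOf_eq] at hv
        have hsame : Fin.insertNth (α := fun _ : Fin (n'+1) => Fin M → ℝ) i0 v Y i0 = v := Fin.insertNth_apply_same (α := fun _ : Fin (n'+1) => Fin M → ℝ) i0 v Y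
        have habove : ∀ i', Fin.insertNth (α := fun _ : Fin (n'+1) => Fin M → ℝ) i0 v Y (i0.succAbove i') = Y i' := fun i' =>
          Fin.insertNth_apply_succAbove (α := fun _ : Fin (n'+1) => Fin M → ℝ) i0 v Y i'
        intro j _
        refine ⟨?_, ?_⟩
        · have h := hv.1 i0 j
          rwa [hsame] at h
        · obtain ⟨k, hk⟩ := hv.2 j
          refine ⟨k, ?_⟩
          rw [Fin.sum_univ_succAbove (fun i => (q i : ℝ) * Fin.insertNth (α := fun _ : Fin (n'+1) => Fin M → ℝ) i0 v Y i j) i0] at hk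
          simp only [hsame, habove] at hk
          exact hk
      calc volume ((fun v => (v, Y)) ⁻¹' (e.symm ⁻¹' S)) ≤ _ := measure_mono hsub
        _ ≤ ENNReal.ofReal (6*ε) ^ M := by
            rw [volume_pi_pi]
            calc ∏ j : Fin M, volume {t : ℝ | t ∈ Ico (0:ℝ) 1 ∧ ∃ k : ℤ,
                  |(q i0 : ℝ) * t + (∑ i', (q (i0.succAbove i') : ℝ) * Y i' j) - k| < ε}
                ≤ ∏ _j : Fin M, ENNReal.ofReal (6*ε) :=
                  Finset.prod_le_prod' fun j _ => groshev_oneDim (q i0) hq _ ε hε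
              _ = ENNReal.ofReal (6*ε) ^ M := by simp
    · rw [indicator_of_notMem
        (show Y ∉ {Y : Fin n' → Fin M → ℝ | ∀ i j, Y i j ∈ Ico (0:ℝ) 1} from hY)]
      have hempty : ((fun v => (v, Y)) ⁻¹' (e.symm ⁻¹' S)) = ∅ := by
        ext v
        simp only [mem_preimage, hins v, hS, mem_setOf_eq, mem_empty_iff_false, iff_false,
          not_and]
        intro hv
        exact absurd (fun i' j => by
          have h := hv (i0.succAbove i') j
          rwa [Fin.insertNth_apply_succAbove (α := fun _ : Fin (n'+1) => Fin M → ℝ)] at h) hY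
      rw [hempty, measure_empty]
  calc (∫⁻ Y, volume ((fun v => (v, Y)) ⁻¹' (e.symm ⁻¹' S))
          ∂(Measure.pi fun _ : Fin n' => (volume : Measure (Fin M → ℝ))))
      ≤ ∫⁻ Y, {Y : Fin n' → Fin M → ℝ | ∀ i j, Y i j ∈ Ico (0:ℝ) 1}.indicator
            (fun _ => ENNReal.ofReal (6*ε) ^ M) Y
          ∂(Measure.pi fun _ : Fin n' => (volume : Measure (Fin M → ℝ))) :=
        lintegral_mono hbound
    _ = ENNReal.ofReal (6*ε) ^ M := by
        rw [lintegral_indicator_const (groshev_box_meas n' M), ← volume_pi, groshev_box_vol,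
          mul_one]


theorem groshev_convergence (n m : ℕ) (hn : 1 ≤ n) (hm : 1 ≤ m) (ψ : ℕ → ℝ)
    (hψ : ∀ r, 0 ≤ ψ r)
    (hsum : Summable fun r : ℕ => (r : ℝ) ^ (n - 1) * ψ r ^ m) :
    volume {X : Fin n → Fin m → ℝ | (∀ i j, X i j ∈ Ico (0:ℝ) 1) ∧
      {q : Fin n → ℤ | q ≠ 0 ∧ ∀ j,
        |(∑ i, (q i : ℝ) * X i j) - round (∑ i, (q i : ℝ) * X i j)| <
          ψ (Finset.univ.sup fun i => (q i).natAbs)}.Infinite} = 0 := by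
  obtain ⟨n', rfl⟩ : ∃ n', n = n' + 1 := ⟨n - 1, (Nat.succ_pred_eq_of_pos hn).symm⟩
  have hsum' : Summable fun r : ℕ => (r : ℝ) ^ n' * ψ r ^ m := by simpa using hsum
  set C : ℝ := ((n' : ℝ) + 1) * (2 * 3 ^ n') * 6 ^ m with hC
  set A : (Fin (n'+1) → ℤ) → ℕ → Set (Fin (n'+1) → Fin m → ℝ) := fun q r =>
    {X | (∀ i j, X i j ∈ Ico (0:ℝ) 1) ∧
      ∀ j, ∃ k : ℤ, |(∑ i, (q i : ℝ) * X i j) - k| < ψ r} with hA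
  set Sq : ℕ → Finset (Fin (n'+1) → ℤ) := fun r =>
    (Fintype.piFinset fun _ : Fin (n'+1) => Finset.Icc (-(r:ℤ)) (r:ℤ)).filter
      (fun q => q ≠ 0 ∧ (Finset.univ.sup fun i => (q i).natAbs) = r) with hSq
  set E : ℕ → Set (Fin (n'+1) → Fin m → ℝ) := fun r => ⋃ q ∈ Sq r, A q r with hE
  -- containment in limsup
  have hsubset : {X : Fin (n'+1) → Fin m → ℝ | (∀ i j, X i j ∈ Ico (0:ℝ) 1) ∧
      {q : Fin (n'+1) → ℤ | q ≠ 0 ∧ ∀ j,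
        |(∑ i, (q i : ℝ) * X i j) - round (∑ i, (q i : ℝ) * X i j)| <
          ψ (Finset.univ.sup fun i => (q i).natAbs)}.Infinite} ⊆ limsup E atTop := by
    rintro X ⟨hbox, hinf⟩
    rw [mem_limsup_iff_frequently_mem]
    rw [show (∃ᶠ r in atTop, X ∈ E r) ↔ {r : ℕ | X ∈ E r}.Infinite from
      Nat.frequently_atTop_iff_infinite]
    by_contra hfin
    rw [Set.not_infinite] at hfin
    have hQsub : {q : Fin (n'+1) → ℤ | q ≠ 0 ∧ ∀ j,
        |(∑ i, (q i : ℝ) * X i j) - round (∑ i, (q i : ℝ) * X i j)| <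
          ψ (Finset.univ.sup fun i => (q i).natAbs)} ⊆
        ⋃ r ∈ {r : ℕ | X ∈ E r}, ((Sq r : Set (Fin (n'+1) → ℤ))) := by
      intro q hq
      obtain ⟨hq0, hqj⟩ := hq
      set r : ℕ := Finset.univ.sup fun i => (q i).natAbs with hr
      have hqS : q ∈ Sq r := by
        rw [hSq, Finset.mem_filter]
        refine ⟨Fintype.mem_piFinset.mpr fun i => Finset.mem_Icc.mpr ?_, hq0, rfl⟩
        have hle : (q i).natAbs ≤ r := Finset.le_sup (f := fun i => (q i).natAbs)
          (Finset.mem_univ i)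
        omega
      have hXA : X ∈ A q r := ⟨hbox, fun j =>
        ⟨round (∑ i, (q i : ℝ) * X i j), hqj j⟩⟩
      have hXE : X ∈ E r := Set.mem_iUnion₂.mpr ⟨q, hqS, hXA⟩
      exact Set.mem_iUnion₂.mpr ⟨r, hXE, hqS⟩
    exact hinf (Set.Finite.subset
      (Set.Finite.biUnion hfin fun r _ => (Sq r).finite_toSet) hQsub)
  -- cardinality bound
  have hcard : ∀ r : ℕ, 1 ≤ r → (Sq r).card ≤ (n' + 1) * (2 * (2*r+1)^n') := by
    intro r hr
    have hsub : Sq r ⊆ Finset.univ.biUnion (fun i : Fin (n'+1) =>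
        Fintype.piFinset (fun j => if j = i then ({(r:ℤ), -(r:ℤ)} : Finset ℤ)
          else Finset.Icc (-(r:ℤ)) (r:ℤ))) := by
      intro q hq
      rw [hSq, Finset.mem_filter] at hq
      obtain ⟨i, -, hi⟩ := Finset.exists_mem_eq_sup Finset.univ Finset.univ_nonempty
        (fun i => (q i).natAbs)
      rw [Finset.mem_biUnion]
      refine ⟨i, Finset.mem_univ i, Fintype.mem_piFinset.mpr fun j => ?_⟩
      by_cases hji : j = i
      · subst hji
        rw [if_pos rfl]
        have h1 : (q j).natAbs = r := by rw [← hq.2.2, hi]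
        simp only [Finset.mem_insert, Finset.mem_singleton]
        omega
      · rw [if_neg hji]
        exact Fintype.mem_piFinset.mp hq.1 j
    have hpc : ∀ i : Fin (n'+1), (Fintype.piFinset (fun j => if j = i
        then ({(r:ℤ), -(r:ℤ)} : Finset ℤ) else Finset.Icc (-(r:ℤ)) (r:ℤ))).card
        = 2 * (2*r+1)^n' := by
      intro i
      rw [Fintype.card_piFinset,
        ← Finset.mul_prod_erase Finset.univ _ (Finset.mem_univ i), if_pos rfl]
      have hc1 : ({(r:ℤ), -(r:ℤ)} : Finset ℤ).card = 2 := by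
        rw [Finset.card_insert_of_notMem (by simp; omega), Finset.card_singleton]
      have hc2 : ∀ j ∈ Finset.univ.erase i,
          ((if j = i then ({(r:ℤ), -(r:ℤ)} : Finset ℤ)
            else Finset.Icc (-(r:ℤ)) (r:ℤ)).card) = 2*r+1 := by
        intro j hj
        rw [if_neg (Finset.ne_of_mem_erase hj), Int.card_Icc]
        omega
      rw [hc1, Finset.prod_congr rfl hc2, Finset.prod_const,
        Finset.card_erase_of_mem (Finset.mem_univ i), Finset.card_univ, Fintype.card_fin,
        Nat.add_sub_cancel]
    calc (Sq r).card ≤ _ := Finset.card_le_card hsub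
      _ ≤ ∑ i : Fin (n'+1), (Fintype.piFinset (fun j => if j = i
          then ({(r:ℤ), -(r:ℤ)} : Finset ℤ) else Finset.Icc (-(r:ℤ)) (r:ℤ))).card :=
        Finset.card_biUnion_le
      _ = (n' + 1) * (2 * (2*r+1)^n') := by
        rw [Finset.sum_congr rfl (fun i _ => hpc i), Finset.sum_const, Finset.card_univ,
          Fintype.card_fin, smul_eq_mul]
  -- measure bound for E r
  have hEbound : ∀ r : ℕ, volume (E r) ≤ ENNReal.ofReal (C * ((r:ℝ)^n' * ψ r ^ m)) := by
    intro r
    rcases Nat.eq_zero_or_pos r with hr | hr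
    · subst hr
      have hSq0 : Sq 0 = ∅ := by
        rw [Finset.eq_empty_iff_forall_notMem]
        intro q hq
        rw [hSq, Finset.mem_filter] at hq
        obtain ⟨-, hq0, hsup⟩ := hq
        apply hq0
        funext i
        have hle : (q i).natAbs ≤ 0 := hsup ▸ Finset.le_sup (f := fun i => (q i).natAbs)
          (Finset.mem_univ i)
        show q i = 0
        omega
      have : E 0 = ∅ := by simp [hE, hSq0]
      rw [this, measure_empty]
      exact zero_le
    · have h2 : ∀ q ∈ Sq r, volume (A q r) ≤ ENNReal.ofReal (6 * ψ r) ^ m := by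
        intro q hq
        rw [hSq, Finset.mem_filter] at hq
        obtain ⟨i0, hi0⟩ := Function.ne_iff.mp hq.2.1
        exact groshev_cell_bound n' m q i0 hi0 (ψ r) (hψ r)
      have hrR : (1:ℝ) ≤ (r:ℝ) := by exact_mod_cast hr
      calc volume (E r) ≤ ∑ q ∈ Sq r, volume (A q r) := measure_biUnion_finset_le _ _
        _ ≤ ∑ _q ∈ Sq r, ENNReal.ofReal (6 * ψ r) ^ m := Finset.sum_le_sum h2
        _ = ((Sq r).card : ℝ≥0∞) * ENNReal.ofReal (6 * ψ r) ^ m := by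
            rw [Finset.sum_const, nsmul_eq_mul]
        _ ≤ ENNReal.ofReal (C * ((r:ℝ)^n' * ψ r ^ m)) := by
            have hψr := hψ r
            rw [← ENNReal.ofReal_natCast ((Sq r).card),
              ← ENNReal.ofReal_pow (by linarith : (0:ℝ) ≤ 6 * ψ r),
              ← ENNReal.ofReal_mul (by positivity)]
            apply ENNReal.ofReal_le_ofReal
            have hcr : (((Sq r).card : ℕ) : ℝ) ≤ ((n':ℝ) + 1) * (2 * (2*(r:ℝ)+1)^n') := by
              have h := hcard r hr
              have h' : (((Sq r).card : ℕ) : ℝ) ≤ (((n' + 1) * (2 * (2*r+1)^n') : ℕ) : ℝ) :=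
                Nat.cast_le.mpr h
              have h'' : (((n' + 1) * (2 * (2*r+1)^n') : ℕ) : ℝ)
                  = ((n':ℝ) + 1) * (2 * (2*(r:ℝ)+1)^n') := by push_cast; ring
              linarith
            have h3 : (2*(r:ℝ)+1)^n' ≤ (3*(r:ℝ))^n' :=
              pow_le_pow_left₀ (by positivity) (by linarith) n'
            have hpnn : (0:ℝ) ≤ (6 * ψ r) ^ m := pow_nonneg (by linarith) m
            have h4 : ((n':ℝ)+1) * (2 * (2*(r:ℝ)+1)^n') ≤ ((n':ℝ)+1) * (2 * (3*(r:ℝ))^n') := by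
              have hnn : (0:ℝ) ≤ (n':ℝ)+1 := by positivity
              nlinarith [h3]
            have h5 : (((n':ℝ) + 1) * (2 * (3*(r:ℝ))^n')) * (6 * ψ r) ^ m
                = C * ((r:ℝ)^n' * ψ r ^ m) := by
              rw [hC, mul_pow 3 (r:ℝ), mul_pow 6 (ψ r)]
              ring
            calc (((Sq r).card : ℕ) : ℝ) * (6 * ψ r) ^ m
                ≤ (((n':ℝ) + 1) * (2 * (2*(r:ℝ)+1)^n')) * (6 * ψ r) ^ m :=
                  mul_le_mul_of_nonneg_right hcr hpnn
              _ ≤ (((n':ℝ) + 1) * (2 * (3*(r:ℝ))^n')) * (6 * ψ r) ^ m :=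
                  mul_le_mul_of_nonneg_right h4 hpnn
              _ = C * ((r:ℝ)^n' * ψ r ^ m) := h5
  refine measure_mono_null hsubset ?_
  apply measure_limsup_atTop_eq_zero
  have hle : ∑' r : ℕ, volume (E r) ≤ ∑' r : ℕ, ENNReal.ofReal (C * ((r:ℝ)^n' * ψ r ^ m)) :=
    ENNReal.tsum_le_tsum hEbound
  rw [← ENNReal.ofReal_tsum_of_nonneg (fun r => mul_nonneg (by positivity) (mul_nonneg (by positivity) (pow_nonneg (hψ r) m))) (hsum'.mul_left C)] at hle
  exact ne_top_of_le_ne_top ENNReal.ofReal_ne_top hle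
end

section
/- Let m ≥ 2 and ψ : ℕ → [0,∞). Then ∑_{r=1}^∞ N_m(r) · max_{t≥1} (ψ(rt)/(rt))^m = ∞ if and only if ∑_{r=1}^∞ ψ(r)^m = ∞, where N_m(r) = #{p ∈ ℤ^m : 0 ≤ p_i < r, gcd(p_1,…,p_m,r)=1}. More precisely, the two sums are comparable: each is bounded above by a constant (depending only on m) times the other. -/
open scoped ENNReal

lemma tele (n : ℕ) : ∑ i ∈ Finset.range n, ((1:ℝ)/(i+2) - 1/(i+3)) = 1/2 - 1/(n+2) := by
  induction n with
  | zero => norm_num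
  | succ n ih =>
    rw [Finset.sum_range_succ, ih]
    push_cast
    have h1 : (n:ℝ)+2 ≠ 0 := by positivity
    have h2 : (n:ℝ)+3 ≠ 0 := by positivity
    field_simp
    ring

lemma prime_sq_sum (r : ℕ) (F : Finset ℕ) (hF : F ⊆ Finset.Icc 2 r) :
    ∑ d ∈ F, (1:ℝ)/(d:ℝ)^2 ≤ 3/4 := by
  have h1 : ∑ d ∈ F, (1:ℝ)/(d:ℝ)^2 ≤ ∑ d ∈ F, (3/2) * ((1:ℝ)/d - 1/(d+1)) := by
    apply Finset.sum_le_sum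
    intro d hd
    have hd2 : (2:ℝ) ≤ (d:ℝ) := by exact_mod_cast (Finset.mem_Icc.mp (hF hd)).1
    have hd0 : (0:ℝ) < d := by linarith
    have hd1 : (0:ℝ) < (d:ℝ)+1 := by linarith
    have e : (1:ℝ)/d - 1/((d:ℝ)+1) = 1/((d:ℝ)*((d:ℝ)+1)) := by field_simp; ring
    rw [e, mul_one_div, div_le_div_iff₀ (by positivity) (by positivity)]
    nlinarith
  have h2 : ∑ d ∈ F, (3/2) * ((1:ℝ)/d - 1/(d+1)) ≤
      ∑ d ∈ Finset.Icc 2 r, (3/2) * ((1:ℝ)/d - 1/(d+1)) := by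
    apply Finset.sum_le_sum_of_subset_of_nonneg hF
    intro d hd _
    have hd2 : (2:ℝ) ≤ (d:ℝ) := by exact_mod_cast (Finset.mem_Icc.mp hd).1
    have : (1:ℝ)/((d:ℝ)+1) ≤ 1/d := by
      apply one_div_le_one_div_of_le (by linarith) (by linarith)
    linarith
  have h3 : ∑ d ∈ Finset.Icc 2 r, ((1:ℝ)/d - 1/(d+1)) ≤ 1/2 := by
    rcases le_or_gt 2 r with h | h
    · have : Finset.Icc 2 r = Finset.Ico 2 (r+1) := by rw [Finset.Ico_add_one_right_eq_Icc]
      rw [this, Finset.sum_Ico_eq_sum_range]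
      have : ∀ i ∈ Finset.range (r+1-2), ((1:ℝ)/(2+i:ℕ) - 1/((2+i:ℕ)+1)) = (1/(i+2) - 1/(i+3)) := by
        intro i _
        push_cast
        ring_nf
      rw [Finset.sum_congr rfl this, tele]
      have : (0:ℝ) ≤ 1/(((r+1-2:ℕ):ℝ)+2) := by positivity
      linarith
    · interval_cases r <;> simp
  rw [← Finset.mul_sum, ← Finset.mul_sum] at h2
  rw [← Finset.mul_sum] at h1
  linarith

def eDvd (r d : ℕ) (hd : d ∣ r) (hd0 : 0 < d) : {x : Fin r // d ∣ (x : ℕ)} ≃ Fin (r / d) where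
  toFun x := ⟨(x.1 : ℕ) / d, Nat.div_lt_div_of_lt_of_dvd hd x.1.2⟩
  invFun k := ⟨⟨k.1 * d, by
      have h1 : k.1 * d < (r / d) * d := by
        exact Nat.mul_lt_mul_of_lt_of_le k.2 le_rfl hd0
      rwa [Nat.div_mul_cancel hd] at h1⟩, dvd_mul_left d k.1⟩
  left_inv x := Subtype.ext (Fin.ext (Nat.div_mul_cancel x.2))
  right_inv k := Fin.ext (Nat.mul_div_cancel k.1 hd0)

lemma card_dvd_pi (m r d : ℕ) (hd : d ∣ r) (hd0 : 0 < d) :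
    Nat.card {q : Fin m → Fin r // ∀ i, d ∣ (q i : ℕ)} = (r / d) ^ m := by
  rw [Nat.card_congr (Equiv.subtypePiEquivPi (p := fun (_ : Fin m) (x : Fin r) => d ∣ (x:ℕ)))]
  rw [Nat.card_pi]
  have h := Nat.card_congr (eDvd r d hd hd0)
  simp only [Nat.card_eq_fintype_card, Fintype.card_fin] at h
  simp [h]

def eMain (m r : ℕ) : {p : Fin m → ℕ // (∀ i, p i < r) ∧
      Nat.gcd (Finset.univ.gcd fun i => p i) r = 1}
    ≃ {q : Fin m → Fin r // Nat.gcd (Finset.univ.gcd fun i => (q i : ℕ)) r = 1} where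
  toFun p := ⟨fun i => ⟨p.1 i, p.2.1 i⟩, p.2.2⟩
  invFun q := ⟨fun i => (q.1 i : ℕ), ⟨fun i => (q.1 i).2, q.2⟩⟩
  left_inv p := rfl
  right_inv q := rfl

lemma N_le (m r : ℕ) : Nat.card {p : Fin m → ℕ // (∀ i, p i < r) ∧
      Nat.gcd (Finset.univ.gcd fun i => p i) r = 1} ≤ r ^ m := by
  rw [Nat.card_congr (eMain m r)]
  calc Nat.card {q : Fin m → Fin r // Nat.gcd (Finset.univ.gcd fun i => (q i : ℕ)) r = 1}
      ≤ Nat.card (Fin m → Fin r) := by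
        classical
        simp only [Nat.card_eq_fintype_card]
        exact Fintype.card_subtype_le _
    _ = r ^ m := by simp [Nat.card_fun]

lemma N_ge (m r : ℕ) (hm : 2 ≤ m) (hr : 1 ≤ r) :
    r ^ m ≤ 4 * Nat.card {p : Fin m → ℕ // (∀ i, p i < r) ∧
      Nat.gcd (Finset.univ.gcd fun i => p i) r = 1} := by
  classical
  rw [Nat.card_congr (eMain m r)]
  set P : (Fin m → Fin r) → Prop :=
    fun q => Nat.gcd (Finset.univ.gcd fun i => (q i : ℕ)) r = 1 with hP
  have hcard : (Finset.univ.filter P).card +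
      (Finset.univ.filter (fun q => ¬ P q)).card = r ^ m := by
    rw [Finset.card_filter_add_card_filter_not]
    simp [Fintype.card_fun]
  have hgood : Nat.card {q // P q} = (Finset.univ.filter P).card := by
    simp [Nat.card_eq_fintype_card, Fintype.card_subtype]
  have hsub : (Finset.univ.filter (fun q => ¬ P q)) ⊆ r.primeFactors.biUnion
      (fun d => Finset.univ.filter (fun q : Fin m → Fin r => ∀ i, d ∣ (q i : ℕ))) := by
    intro q hq
    simp only [Finset.mem_filter, Finset.mem_univ, true_and, hP] at hq
    set G := Finset.univ.gcd fun i => ((q i : ℕ)) with hG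
    have hgr : Nat.gcd G r ∣ r := Nat.gcd_dvd_right _ _
    obtain ⟨d, hdp, hdg⟩ := Nat.exists_prime_and_dvd hq
    refine Finset.mem_biUnion.mpr ⟨d, ?_, ?_⟩
    · exact Nat.mem_primeFactors.mpr ⟨hdp, hdg.trans hgr, by omega⟩
    · simp only [Finset.mem_filter, Finset.mem_univ, true_and]
      intro i
      exact ((hdg.trans (Nat.gcd_dvd_left G r)).trans (Finset.gcd_dvd (Finset.mem_univ i)))
  have hbad : (Finset.univ.filter (fun q => ¬ P q)).card ≤
      ∑ d ∈ r.primeFactors, (r / d) ^ m := by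
    calc (Finset.univ.filter (fun q => ¬ P q)).card
        ≤ (r.primeFactors.biUnion (fun d => Finset.univ.filter
            (fun q : Fin m → Fin r => ∀ i, d ∣ (q i : ℕ)))).card := Finset.card_le_card hsub
      _ ≤ ∑ d ∈ r.primeFactors, (Finset.univ.filter
            (fun q : Fin m → Fin r => ∀ i, d ∣ (q i : ℕ))).card := Finset.card_biUnion_le
      _ = ∑ d ∈ r.primeFactors, (r/d)^m := by
          apply Finset.sum_congr rfl
          intro d hd
          have h := card_dvd_pi m r d (Nat.mem_primeFactors.mp hd).2.1
            (Nat.mem_primeFactors.mp hd).1.pos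
          rw [← h]
          simp [Nat.card_eq_fintype_card, Fintype.card_subtype]
  have hF : r.primeFactors ⊆ Finset.Icc 2 r := by
    intro d hd
    obtain ⟨hdp, hdr, hr0⟩ := Nat.mem_primeFactors.mp hd
    exact Finset.mem_Icc.mpr ⟨hdp.two_le, Nat.le_of_dvd (by omega) hdr⟩
  have hterm : ∀ d ∈ r.primeFactors, ((r / d : ℕ) : ℝ)^m ≤ (r:ℝ)^m * ((1:ℝ)/(d:ℝ)^2) := by
    intro d hd
    obtain ⟨hdp, hdr, -⟩ := Nat.mem_primeFactors.mp hd
    have hd0 : (0:ℝ) < d := by exact_mod_cast hdp.pos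
    have h1 : ((r / d : ℕ) : ℝ) ≤ (r:ℝ)/d := Nat.cast_div_le
    have h2 : ((r / d : ℕ) : ℝ)^m ≤ ((r:ℝ)/d)^m := pow_le_pow_left₀ (by positivity) h1 m
    have h4 : ((1:ℝ)/d)^m ≤ ((1:ℝ)/d)^2 :=
      pow_le_pow_of_le_one (by positivity)
        (by rw [div_le_one hd0]; exact_mod_cast hdp.one_lt.le) hm
    calc ((r / d : ℕ) : ℝ)^m ≤ ((r:ℝ)/d)^m := h2
      _ = (r:ℝ)^m * ((1:ℝ)/d)^m := by rw [div_pow]; ring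
      _ ≤ (r:ℝ)^m * ((1:ℝ)/d)^2 := mul_le_mul_of_nonneg_left h4 (by positivity)
      _ = (r:ℝ)^m * ((1:ℝ)/(d:ℝ)^2) := by rw [div_pow]; ring
  have hsum : ((∑ d ∈ r.primeFactors, (r / d) ^ m : ℕ) : ℝ) ≤ (r:ℝ)^m * (3/4) := by
    push_cast
    calc ∑ d ∈ r.primeFactors, ((r / d : ℕ) : ℝ)^m
        ≤ ∑ d ∈ r.primeFactors, (r:ℝ)^m * ((1:ℝ)/(d:ℝ)^2) := Finset.sum_le_sum hterm
      _ = (r:ℝ)^m * ∑ d ∈ r.primeFactors, (1:ℝ)/(d:ℝ)^2 := by rw [Finset.mul_sum]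
      _ ≤ (r:ℝ)^m * (3/4) :=
          mul_le_mul_of_nonneg_left (prime_sq_sum r _ hF) (by positivity)
  have h4bad : 4 * (Finset.univ.filter (fun q => ¬ P q)).card ≤ 3 * r ^ m := by
    have hc : ((Finset.univ.filter (fun q => ¬ P q)).card : ℝ) ≤ (r:ℝ)^m * (3/4) := by
      refine le_trans ?_ hsum
      exact_mod_cast hbad
    have : (4 * (Finset.univ.filter (fun q => ¬ P q)).card : ℝ) ≤ 3 * (r:ℝ)^m := by
      push_cast
      linarith
    exact_mod_cast this
  rw [hgood]
  omega

theorem catlin_gallagher_sum_comparison (m : ℕ) (hm : 2 ≤ m) (ψ : ℕ → ℝ)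
    (hψ : ∀ r, 0 ≤ ψ r) :
    ∃ C : ℝ≥0∞, 0 < C ∧ C ≠ ⊤ ∧
      ((∑' r : ℕ, if 1 ≤ r then
          (Nat.card {p : Fin m → ℕ // (∀ i, p i < r) ∧
              Nat.gcd (Finset.univ.gcd fun i => p i) r = 1} : ℝ≥0∞) *
            ⨆ t : ℕ, ENNReal.ofReal ((ψ (r * (t + 1)) / (r * (t + 1))) ^ m)
        else 0) ≤
        C * ∑' r : ℕ, if 1 ≤ r then ENNReal.ofReal (ψ r ^ m) else 0) ∧
      ((∑' r : ℕ, if 1 ≤ r then ENNReal.ofReal (ψ r ^ m) else 0) ≤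
        C * ∑' r : ℕ, if 1 ≤ r then
          (Nat.card {p : Fin m → ℕ // (∀ i, p i < r) ∧
              Nat.gcd (Finset.univ.gcd fun i => p i) r = 1} : ℝ≥0∞) *
            ⨆ t : ℕ, ENNReal.ofReal ((ψ (r * (t + 1)) / (r * (t + 1))) ^ m)
        else 0) ∧
      ((∑' r : ℕ, if 1 ≤ r then
          (Nat.card {p : Fin m → ℕ // (∀ i, p i < r) ∧
              Nat.gcd (Finset.univ.gcd fun i => p i) r = 1} : ℝ≥0∞) *
            ⨆ t : ℕ, ENNReal.ofReal ((ψ (r * (t + 1)) / (r * (t + 1))) ^ m)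
        else 0) = ⊤ ↔ (∑' r : ℕ, if 1 ≤ r then ENNReal.ofReal (ψ r ^ m) else 0) = ⊤) := by
  classical
  set N : ℕ → ℕ := fun r => Nat.card {p : Fin m → ℕ // (∀ i, p i < r) ∧
      Nat.gcd (Finset.univ.gcd fun i => p i) r = 1} with hN
  set g : ℕ → ℕ → ℝ≥0∞ :=
    fun r t => ENNReal.ofReal ((ψ (r * (t + 1)) / (r * (t + 1))) ^ m) with hg
  set F : ℕ → ℝ≥0∞ := fun q => if 1 ≤ q then ENNReal.ofReal (ψ q ^ m) else 0 with hF
  set Aterm : ℕ → ℝ≥0∞ :=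
    fun r => if 1 ≤ r then (N r : ℝ≥0∞) * ⨆ t : ℕ, g r t else 0 with hAterm
  set c : ℕ → ℝ≥0∞ := fun t => ENNReal.ofReal (1/((t:ℝ)+1)^2) with hc
  set K : ℝ≥0∞ := ∑' t, c t with hK
  -- K is finite
  have hsummable : Summable (fun t : ℕ => 1/((t:ℝ)+1)^2) := by
    have h := Real.summable_one_div_nat_pow.mpr one_lt_two
    have h2 := h.comp_injective (fun a b hab => Nat.succ_injective hab :
      Function.Injective Nat.succ)
    refine h2.congr fun t => ?_
    simp [Function.comp]
  have hKne : K ≠ ⊤ := by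
    rw [hK, ← ENNReal.ofReal_tsum_of_nonneg (fun t => by positivity) hsummable]
    exact ENNReal.ofReal_ne_top
  have hCne : K + 4 ≠ ⊤ := by simp [ENNReal.add_ne_top, hKne]
  -- termwise bound for goal 1
  have step1 : ∀ r, Aterm r ≤ ∑' t, F (r*(t+1)) * c t := by
    intro r
    rcases Nat.eq_zero_or_pos r with h0 | hr
    · subst h0; simp [hAterm]
    · have hr' : 1 ≤ r := hr
      rw [hAterm]
      simp only [hr', if_true]
      rw [ENNReal.mul_iSup]
      refine iSup_le fun t => le_trans ?_ (ENNReal.le_tsum t)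
      have hq : 1 ≤ r * (t+1) := Nat.one_le_iff_ne_zero.mpr (by positivity)
      rw [hF]
      simp only [hq, if_true]
      have hcast : (N r : ℝ≥0∞) ≤ ENNReal.ofReal ((r:ℝ)^m) := by
        rw [← ENNReal.ofReal_natCast (N r)]
        apply ENNReal.ofReal_le_ofReal
        exact_mod_cast N_le m r
      have hrpos : (0:ℝ) < r := by exact_mod_cast hr
      have htpos : (0:ℝ) < (t:ℝ)+1 := by positivity
      have hreal : (r:ℝ)^m * (ψ (r*(t+1)) / ((r:ℝ)*((t:ℝ)+1)))^m ≤
          ψ (r*(t+1))^m * (1/((t:ℝ)+1)^2) := by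
        have e1 : (r:ℝ)^m * (ψ (r*(t+1)) / ((r:ℝ)*((t:ℝ)+1)))^m
            = ψ (r*(t+1))^m * (1/((t:ℝ)+1))^m := by
          rw [div_pow, mul_pow, div_pow, one_pow]
          field_simp
        rw [e1]
        have e2 : ((1:ℝ)/((t:ℝ)+1))^m ≤ ((1:ℝ)/((t:ℝ)+1))^2 :=
          pow_le_pow_of_le_one (by positivity) (by rw [div_le_one htpos]; linarith) hm
        have e3 : ((1:ℝ)/((t:ℝ)+1))^2 = 1/((t:ℝ)+1)^2 := by rw [div_pow, one_pow]
        have hψq : (0:ℝ) ≤ ψ (r*(t+1))^m := pow_nonneg (hψ _) m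
        calc ψ (r*(t+1))^m * ((1:ℝ)/((t:ℝ)+1))^m
            ≤ ψ (r*(t+1))^m * ((1:ℝ)/((t:ℝ)+1))^2 := mul_le_mul_of_nonneg_left e2 hψq
          _ = ψ (r*(t+1))^m * (1/((t:ℝ)+1)^2) := by rw [e3]
      calc (N r : ℝ≥0∞) * g r t ≤ ENNReal.ofReal ((r:ℝ)^m) * g r t :=
            mul_le_mul_left hcast _
        _ = ENNReal.ofReal ((r:ℝ)^m * (ψ (r*(t+1)) / ((r:ℝ)*((t:ℝ)+1)))^m) := by
            rw [hg, ← ENNReal.ofReal_mul (by positivity)]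
        _ ≤ ENNReal.ofReal (ψ (r*(t+1))^m * (1/((t:ℝ)+1)^2)) :=
            ENNReal.ofReal_le_ofReal hreal
        _ = ENNReal.ofReal (ψ (r*(t+1))^m) * c t := by
            rw [hc, ← ENNReal.ofReal_mul (pow_nonneg (hψ _) m)]
  have hAS : (∑' r, Aterm r) ≤ (K + 4) * ∑' q, F q := by
    calc (∑' r, Aterm r) ≤ ∑' r, ∑' t, F (r*(t+1)) * c t := ENNReal.tsum_le_tsum step1
      _ = ∑' t, ∑' r, F (r*(t+1)) * c t := ENNReal.tsum_comm
      _ = ∑' t, (∑' r, F (r*(t+1))) * c t := tsum_congr fun t => ENNReal.tsum_mul_right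
      _ ≤ ∑' t, (∑' q, F q) * c t := by
          refine ENNReal.tsum_le_tsum fun t => mul_le_mul_left ?_ _
          exact ENNReal.tsum_comp_le_tsum_of_injective
            (fun a b hab => Nat.eq_of_mul_eq_mul_right (Nat.succ_pos t) hab) F
      _ = (∑' q, F q) * K := ENNReal.tsum_mul_left
      _ ≤ (K + 4) * ∑' q, F q := by rw [mul_comm]; exact mul_le_mul_left le_self_add _
  have step2 : ∀ q, F q ≤ 4 * Aterm q := by
    intro q
    rcases Nat.eq_zero_or_pos q with h0 | hq
    · subst h0; simp [hF]
    · have hq' : 1 ≤ q := hq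
      rw [hF, hAterm]
      simp only [hq', if_true]
      have hqpos : (0:ℝ) < q := by exact_mod_cast hq
      have hg0 : g q 0 = ENNReal.ofReal ((ψ q / (q:ℝ))^m) := by
        rw [hg]; norm_num
      have h1 : ENNReal.ofReal (ψ q ^ m) ≤ (↑(q^m) : ℝ≥0∞) * g q 0 := by
        rw [hg0, ← ENNReal.ofReal_natCast (q^m), ← ENNReal.ofReal_mul (by positivity)]
        apply ENNReal.ofReal_le_ofReal
        have he : ((q^m : ℕ):ℝ) * (ψ q / (q:ℝ))^m = ψ q ^ m := by
          push_cast
          rw [div_pow]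
          field_simp
        rw [he]
      have h2 : (↑(q^m) : ℝ≥0∞) ≤ 4 * (N q : ℝ≥0∞) := by
        have := N_ge m q hm hq
        exact_mod_cast this
      have h3 : g q 0 ≤ ⨆ t, g q t := le_iSup _ 0
      calc ENNReal.ofReal (ψ q ^ m) ≤ (↑(q^m) : ℝ≥0∞) * g q 0 := h1
        _ ≤ (4 * (N q : ℝ≥0∞)) * g q 0 := mul_le_mul_left h2 _
        _ = 4 * ((N q : ℝ≥0∞) * g q 0) := by ring
        _ ≤ 4 * ((N q : ℝ≥0∞) * ⨆ t, g q t) :=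
            mul_le_mul_right (mul_le_mul_right h3 _) _
  have hSA : (∑' q, F q) ≤ (K + 4) * ∑' r, Aterm r := by
    calc (∑' q, F q) ≤ ∑' q, 4 * Aterm q := ENNReal.tsum_le_tsum step2
      _ = 4 * ∑' q, Aterm q := ENNReal.tsum_mul_left
      _ ≤ (K + 4) * ∑' r, Aterm r := mul_le_mul_left le_add_self _
  refine ⟨K + 4, ?_, hCne, hAS, hSA, ?_⟩
  · have h4 : (0:ℝ≥0∞) < 4 := by norm_num
    exact lt_of_lt_of_le h4 le_add_self
  · constructor
    · intro hA
      by_contra hS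
      have hne : (K + 4) * (∑' q, F q) ≠ ⊤ := ENNReal.mul_ne_top hCne hS
      exact hne (top_le_iff.mp (hA ▸ hAS))
    · intro hS
      by_contra hA
      have hne : (K + 4) * (∑' r, Aterm r) ≠ ⊤ := ENNReal.mul_ne_top hCne hA
      exact hne (top_le_iff.mp (hS ▸ hSA))
end

section
/- Let f be a dimension function (f : [0,∞) → [0,∞) increasing, continuous at 0 with f(0)=0), let m ≥ 1, and let ψ : ℕ → [0,∞) with ∑_{r=1}^∞ r^m · f(ψ(r)/r) < ∞. Then the Hausdorff f-measure H^f of the set A_m(ψ) = {x ∈ [0,1)^m : max_i ‖q x_i‖ < ψ(q) for infinitely many q ∈ ℕ} is zero. -/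
open MeasureTheory Set
open scoped ENNReal

noncomputable def jdelta (ψ : ℕ → ℝ) (q : ℕ) : ℝ := min (ψ q) 1 / q

noncomputable def jbox (m : ℕ) (ψ : ℕ → ℝ) (Q : ℕ) (c : ℕ × (Fin m → ℕ × Bool)) :
    Set (Fin m → ℝ) :=
  if Q ≤ c.1 ∧ 0 < c.1 ∧ ∀ i, (c.2 i).1 ≤ c.1 then
    {x | ∀ i, x i ∈ Icc
      (((c.2 i).1 : ℝ) / c.1 - (if (c.2 i).2 then 0 else jdelta ψ c.1))
      (((c.2 i).1 : ℝ) / c.1 - (if (c.2 i).2 then 0 else jdelta ψ c.1) + jdelta ψ c.1)}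
  else ∅

lemma jdelta_nonneg {ψ : ℕ → ℝ} (hψ : ∀ r, 0 ≤ ψ r) (q : ℕ) : 0 ≤ jdelta ψ q :=
  div_nonneg (le_min (hψ q) one_pos.le) (Nat.cast_nonneg q)

lemma jdelta_le_inv {ψ : ℕ → ℝ} (q : ℕ) : jdelta ψ q ≤ 1 / q := by
  rcases Nat.eq_zero_or_pos q with h | h
  · simp [jdelta, h]
  · have : (0:ℝ) < q := by exact_mod_cast h
    unfold jdelta
    gcongr
    exact min_le_right _ _

lemma jdelta_le (ψ : ℕ → ℝ) (q : ℕ) (hq : 0 ≤ ψ q) : jdelta ψ q ≤ ψ q / q := by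
  unfold jdelta
  rcases Nat.eq_zero_or_pos q with h | h
  · simp [h]
  · have : (0:ℝ) < q := by exact_mod_cast h
    gcongr
    exact min_le_left _ _

lemma jbox_diam {m : ℕ} {ψ : ℕ → ℝ} (hψ : ∀ r, 0 ≤ ψ r) (Q : ℕ) (c : ℕ × (Fin m → ℕ × Bool)) :
    EMetric.diam (jbox m ψ Q c) ≤ ENNReal.ofReal (jdelta ψ c.1) := by
  rw [jbox]
  split_ifs with h
  · apply EMetric.diam_le
    intro x hx y hy
    rw [edist_dist]
    apply ENNReal.ofReal_le_ofReal
    rw [dist_pi_le_iff (jdelta_nonneg hψ _)]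
    intro i
    have := Real.dist_le_of_mem_Icc (hx i) (hy i)
    simpa using this
  · simp [EMetric.diam]

lemma jbox_cover {m : ℕ} {ψ : ℕ → ℝ} (hψ : ∀ r, 0 ≤ ψ r) (Q : ℕ) {x : Fin m → ℝ}
    (hx1 : ∀ i, x i ∈ Ico (0:ℝ) 1)
    (hx2 : {q : ℕ | 0 < q ∧ ∀ i,
      |(q : ℝ) * x i - round ((q : ℝ) * x i)| < ψ q}.Infinite) :
    ∃ c, x ∈ jbox m ψ Q c := by
  obtain ⟨q, hq, hQq⟩ := hx2.exists_gt Q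
  obtain ⟨hq0, hqx⟩ := hq
  have hq0' : (0:ℝ) < q := by exact_mod_cast hq0
  -- basic facts about rounds
  have hround_mem : ∀ i, 0 ≤ round ((q:ℝ) * x i) ∧ round ((q:ℝ) * x i) ≤ q := by
    intro i
    have h0 : 0 ≤ (q:ℝ) * x i := mul_nonneg hq0'.le (hx1 i).1
    have h1 : (q:ℝ) * x i < q := by
      nlinarith [(hx1 i).2]
    have habs := abs_sub_round ((q:ℝ) * x i)
    constructor
    · have : (-1 : ℤ) < round ((q:ℝ) * x i) := by
        have : (-1 : ℝ) < (round ((q:ℝ) * x i) : ℝ) := by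
          rw [abs_sub_le_iff] at habs; linarith [habs.1]
        exact_mod_cast this
      omega
    · have : (round ((q:ℝ) * x i) : ℝ) < (q:ℝ) + 1 := by
        rw [abs_sub_le_iff] at habs; linarith [habs.2]
      have : round ((q:ℝ) * x i) < (q:ℤ) + 1 := by exact_mod_cast this
      omega
  set p : Fin m → ℕ := fun i => (round ((q:ℝ) * x i)).toNat with hp
  have hpcast : ∀ i, (p i : ℝ) = (round ((q:ℝ) * x i) : ℝ) := by
    intro i
    have := (hround_mem i).1
    simp only [hp]
    exact_mod_cast congrArg (fun z : ℤ => (z:ℝ)) (Int.toNat_of_nonneg this)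
  have hdist : ∀ i, |x i - (p i : ℝ) / q| ≤ jdelta ψ q := by
    intro i
    have h1 : |(q:ℝ) * x i - (p i : ℝ)| ≤ min (ψ q) 1 := by
      rw [hpcast i]
      refine le_min (hqx i).le ?_
      have := abs_sub_round ((q:ℝ) * x i)
      linarith
    have h2 : |x i - (p i : ℝ) / q| = |(q:ℝ) * x i - (p i : ℝ)| / q := by
      rw [← abs_of_pos hq0', ← abs_div]
      congr 1
      field_simp
      rw [abs_of_pos hq0']
      ring
    rw [h2, jdelta]
    gcongr
  refine ⟨(q, fun i => (p i, decide ((p i : ℝ) / q ≤ x i))), ?_⟩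
  have hple : ∀ i, p i ≤ q := by
    intro i
    have h2 := (hround_mem i).2
    have h := hpcast i
    have : (p i : ℝ) ≤ (q:ℝ) := by rw [h]; exact_mod_cast h2
    exact_mod_cast this
  rw [jbox]
  rw [if_pos ⟨hQq.le, hq0, hple⟩]
  · intro i
    have hd := hdist i
    rw [abs_sub_le_iff] at hd
    have hb : (decide ((p i : ℝ)/q ≤ x i) = true) ↔ ((p i : ℝ)/q ≤ x i) := by simp
    simp only [mem_Icc]
    by_cases h : (p i : ℝ) / q ≤ x i
    · rw [if_pos (hb.2 h)]
      exact ⟨by linarith [hd.2], by linarith [hd.1]⟩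
    · rw [if_neg (fun hc => h (hb.1 hc))]
      push_neg at h
      exact ⟨by linarith [hd.2], by linarith [hd.1]⟩

lemma tsum_tail_eq (g : ℕ → ℝ≥0∞) (Q : ℕ) :
    (∑' q, if Q ≤ q then g q else 0) = ∑' k, g (k + Q) := by
  let e : ℕ ≃ (Ici Q : Set ℕ) :=
    ⟨fun k => ⟨k + Q, Nat.le_add_left _ _⟩, fun q => q.1 - Q, fun k => by simp,
      fun q => by ext; simp [Nat.sub_add_cancel q.2]⟩
  calc (∑' q, if Q ≤ q then g q else 0) = ∑' q, Set.indicator (Ici Q) g q := by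
        refine tsum_congr fun q => ?_
        rw [Set.indicator_apply]
        simp [mem_Ici]
    _ = ∑' (q : (Ici Q : Set ℕ)), g q := (tsum_subtype (Ici Q) g).symm
    _ = ∑' k, g (k + Q) := by
        rw [← Equiv.tsum_eq e (fun q : (Ici Q : Set ℕ) => g q.1)]
        rfl

lemma jbox_term_le {m : ℕ} {ψ : ℕ → ℝ} (hψ : ∀ r, 0 ≤ ψ r) {f : ℝ → ℝ}
    (hf_mono : Monotone f) (Q : ℕ) (c : ℕ × (Fin m → ℕ × Bool)) :
    ENNReal.ofReal (f (EMetric.diam (jbox m ψ Q c)).toReal)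
      ≤ ENNReal.ofReal (f (jdelta ψ c.1)) := by
  apply ENNReal.ofReal_le_ofReal
  apply hf_mono
  exact ENNReal.toReal_le_of_le_ofReal (jdelta_nonneg hψ _) (jbox_diam hψ Q c)

theorem jarnik_convergence (m : ℕ) (hm : 1 ≤ m) (f : ℝ → ℝ)
    (hf_mono : Monotone f) (hf0 : f 0 = 0) (hf_nonneg : ∀ r, 0 ≤ f r)
    (hf_cont : ContinuousWithinAt f (Ici 0) 0)
    (ψ : ℕ → ℝ) (hψ : ∀ r, 0 ≤ ψ r)
    (hsum : Summable fun r : ℕ => (r : ℝ) ^ m * f (ψ r / r)) :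
    Measure.mkMetric (fun r : ℝ≥0∞ => ENNReal.ofReal (f r.toReal))
      ({x : Fin m → ℝ | (∀ i, x i ∈ Ico (0:ℝ) 1) ∧
        {q : ℕ | 0 < q ∧ ∀ i,
          |(q : ℝ) * x i - round ((q : ℝ) * x i)| < ψ q}.Infinite}) = 0 := by
  set μm : ℝ≥0∞ → ℝ≥0∞ := fun r => ENNReal.ofReal (f r.toReal) with hμm
  set g : ℕ → ℝ≥0∞ := fun q => ENNReal.ofReal ((4:ℝ)^m * ((q:ℝ)^m * f (ψ q / q))) with hg
  have hgsum : ∑' q, g q ≠ ⊤ := by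
    rw [hg, ← ENNReal.ofReal_tsum_of_nonneg]
    · exact ENNReal.ofReal_ne_top
    · intro n
      exact mul_nonneg (by positivity) (mul_nonneg (by positivity) (hf_nonneg _))
    · exact hsum.mul_left _
  have key := Measure.mkMetric_le_liminf_tsum
    ({x : Fin m → ℝ | (∀ i, x i ∈ Ico (0:ℝ) 1) ∧
        {q : ℕ | 0 < q ∧ ∀ i,
          |(q : ℝ) * x i - round ((q : ℝ) * x i)| < ψ q}.Infinite})
    (fun Q : ℕ => ENNReal.ofReal (1/(Q:ℝ)))
    (by
      have h1 : Filter.Tendsto (fun Q : ℕ => 1/(Q:ℝ)) Filter.atTop (nhds 0) :=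
        tendsto_one_div_atTop_nhds_zero_nat
      simpa using ENNReal.tendsto_ofReal h1)
    (fun Q c => jbox m ψ Q c)
    (by
      filter_upwards [Filter.eventually_ge_atTop 1] with Q hQ c
      by_cases h : Q ≤ c.1 ∧ 0 < c.1 ∧ ∀ i, (c.2 i).1 ≤ c.1
      · refine (jbox_diam hψ Q c).trans (ENNReal.ofReal_le_ofReal
          ((jdelta_le_inv c.1).trans ?_))
        have hQ0 : (0:ℝ) < Q := by exact_mod_cast hQ
        have hq : (Q:ℝ) ≤ c.1 := by exact_mod_cast h.1
        exact one_div_le_one_div_of_le hQ0 hq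
      · rw [jbox, if_neg h]
        simp)
    (by
      refine Filter.Eventually.of_forall fun Q => ?_
      rintro x ⟨hx1, hx2⟩
      obtain ⟨c, hc⟩ := jbox_cover hψ Q hx1 hx2
      exact mem_iUnion.2 ⟨c, hc⟩)
    μm
  have hbound : ∀ᶠ Q in Filter.atTop,
      (∑' c : ℕ × (Fin m → ℕ × Bool), μm (EMetric.diam (jbox m ψ Q c)))
        ≤ ∑' k, g (k + Q) := by
    refine Filter.Eventually.of_forall fun Q => ?_
    rw [← tsum_tail_eq g Q]
    calc (∑' c : ℕ × (Fin m → ℕ × Bool), μm (EMetric.diam (jbox m ψ Q c)))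
        = ∑' q, ∑' c : Fin m → ℕ × Bool, μm (EMetric.diam (jbox m ψ Q (q, c))) :=
          ENNReal.tsum_prod' (f := fun c : ℕ × (Fin m → ℕ × Bool) => μm (EMetric.diam (jbox m ψ Q c)))
      _ ≤ ∑' q, (if Q ≤ q then g q else 0) := by
          refine ENNReal.tsum_le_tsum fun q => ?_
          by_cases hq : Q ≤ q ∧ 0 < q
          · rw [if_pos hq.1]
            set F : Finset (Fin m → ℕ × Bool) :=
              Fintype.piFinset (fun _ => Finset.range (q+1) ×ˢ (Finset.univ : Finset Bool))
              with hF
            have hzero : ∀ c ∉ F, μm (EMetric.diam (jbox m ψ Q (q, c))) = 0 := by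
              intro c hc
              have hnc : ¬ ∀ i, (c i).1 ≤ q := by
                simp only [hF, Fintype.mem_piFinset, Finset.mem_product, Finset.mem_range,
                  Finset.mem_univ, and_true, not_forall, Nat.lt_succ_iff] at hc
                exact not_forall.2 hc
              rw [jbox, if_neg (by tauto)]
              simp [hμm, hf0, EMetric.diam]
            rw [tsum_eq_sum hzero]
            have hcard : F.card = ((q+1)*2)^m := by
              rw [hF, Fintype.card_piFinset_const]
              simp [Finset.card_product]
            calc ∑ c ∈ F, μm (EMetric.diam (jbox m ψ Q (q, c)))
                ≤ F.card • ENNReal.ofReal (f (jdelta ψ q)) :=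
                  Finset.sum_le_card_nsmul _ _ _ (fun c _ => jbox_term_le hψ hf_mono Q (q, c))
              _ ≤ g q := by
                  rw [nsmul_eq_mul, hcard, hg]
                  rw [← ENNReal.ofReal_natCast, ← ENNReal.ofReal_mul (by positivity)]
                  apply ENNReal.ofReal_le_ofReal
                  have hq1 : (1:ℝ) ≤ q := by exact_mod_cast hq.2
                  have hc1 : (((q+1)*2 : ℕ) : ℝ) ≤ 4*q := by push_cast; linarith
                  have hc2 : ((((q+1)*2 : ℕ):ℝ))^m ≤ (4*(q:ℝ))^m :=
                    pow_le_pow_left₀ (by positivity) hc1 m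
                  have hfd : f (jdelta ψ q) ≤ f (ψ q / q) := hf_mono (jdelta_le ψ q (hψ q))
                  calc (((((q+1)*2)^m : ℕ)):ℝ) * f (jdelta ψ q)
                      = ((((q+1)*2 : ℕ):ℝ))^m * f (jdelta ψ q) := by push_cast; ring
                    _ ≤ (4*(q:ℝ))^m * f (ψ q / q) :=
                        mul_le_mul hc2 hfd (hf_nonneg _) (by positivity)
                    _ = 4^m * ((q:ℝ)^m * f (ψ q / q)) := by rw [mul_pow]; ring
          · have hz : ∀ c : Fin m → ℕ × Bool, μm (EMetric.diam (jbox m ψ Q (q, c))) = 0 := by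
              intro c
              rw [jbox, if_neg (by tauto)]
              simp [hμm, hf0, EMetric.diam]
            rw [tsum_congr hz, tsum_zero]
            exact zero_le
  have h0 : Filter.Tendsto (fun Q => ∑' k, g (k + Q)) Filter.atTop (nhds 0) :=
    ENNReal.tendsto_sum_nat_add g hgsum
  have : Measure.mkMetric μm
      ({x : Fin m → ℝ | (∀ i, x i ∈ Ico (0:ℝ) 1) ∧
        {q : ℕ | 0 < q ∧ ∀ i,
          |(q : ℝ) * x i - round ((q : ℝ) * x i)| < ψ q}.Infinite}) ≤ 0 := by
    refine key.trans ?_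
    calc Filter.liminf (fun Q => ∑' c : ℕ × (Fin m → ℕ × Bool),
            μm (EMetric.diam (jbox m ψ Q c))) Filter.atTop
        ≤ Filter.liminf (fun Q => ∑' k, g (k + Q)) Filter.atTop :=
          Filter.liminf_le_liminf hbound
      _ = 0 := h0.liminf_eq
  exact le_antisymm this zero_le
end

section
/- Let n ≥ 2 and let ϑ : ℕ → [0,∞) be any function such that the set A(ϑ) = {x ∈ [0,1) : ‖qx‖ < ϑ(q) for infinitely many q} has one-dimensional Lebesgue measure zero while ∑_q ϑ(q) = ∞. Define Ψ : ℤ^n → [0,∞) by Ψ(q₁,0,…,0) = ϑ(|q₁|) for q₁ ≠ 0 and Ψ(q) = 0 otherwise. Then ∑_{q ∈ ℤ^n \ {0}} Ψ(q) = ∞, yet the set A_{n,1}(Ψ) = {x ∈ [0,1)^n : ‖q·x‖ < Ψ(q) for infinitely many q ∈ ℤ^n \ {0}} has n-dimensional Lebesgue measure zero. -/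
open MeasureTheory Set
open scoped ENNReal

lemma abs_sub_round_neg (y : ℝ) : |(-y) - round (-y)| = |y - round y| := by
  rw [abs_sub_round_eq_min, abs_sub_round_eq_min]
  by_cases h : Int.fract y = 0
  · rw [Int.fract_neg_eq_zero.mpr h, h]
  · rw [Int.fract_neg h, min_comm]
    congr 1
    ring

theorem sprindzuk_primitivity_counterexample (n : ℕ) (hn : 2 ≤ n)
    (ϑ : ℕ → ℝ) (hϑ : ∀ r, 0 ≤ ϑ r)
    (hdiv : (∑' r : ℕ, ENNReal.ofReal (ϑ r)) = ⊤)
    (hnull : volume {x : ℝ | x ∈ Ico (0:ℝ) 1 ∧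
      {q : ℕ | 0 < q ∧ |(q : ℝ) * x - round ((q : ℝ) * x)| < ϑ q}.Infinite} = 0)
    (Ψ : (Fin n → ℤ) → ℝ)
    (hΨ : ∀ q : Fin n → ℤ,
      Ψ q = if q (⟨0, by omega⟩ : Fin n) ≠ 0 ∧ (∀ i : Fin n, i.val ≠ 0 → q i = 0)
        then ϑ ((q (⟨0, by omega⟩ : Fin n)).natAbs) else 0) :
    (∑' q : Fin n → ℤ, ENNReal.ofReal (Ψ q)) = ⊤ ∧
    volume {x : Fin n → ℝ | (∀ i, x i ∈ Ico (0:ℝ) 1) ∧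
      {q : Fin n → ℤ | q ≠ 0 ∧
        |(∑ i, (q i : ℝ) * x i) - round (∑ i, (q i : ℝ) * x i)| < Ψ q}.Infinite} = 0 := by
  have hn0 : 0 < n := by omega
  set i0 : Fin n := ⟨0, by omega⟩ with hi0
  constructor
  · -- divergence of the sum
    set e : ℕ → (Fin n → ℤ) := fun r => Pi.single i0 ((r : ℤ) + 1) with he
    have hinj : Function.Injective e := by
      intro a b hab
      have := congrFun hab i0
      simp [he, Pi.single_eq_same] at this
      omega
    have hle : (∑' r : ℕ, ENNReal.ofReal (Ψ (e r))) ≤ ∑' q, ENNReal.ofReal (Ψ q) :=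
      ENNReal.tsum_comp_le_tsum_of_injective hinj _
    have hval : ∀ r : ℕ, Ψ (e r) = ϑ (r + 1) := by
      intro r
      rw [hΨ]
      rw [if_pos]
      · simp [he, Pi.single_eq_same]
        norm_cast
      · constructor
        · simp [he, Pi.single_eq_same]
          omega
        · intro i hi
          have : i ≠ i0 := by
            intro h; rw [h] at hi; exact hi rfl
          simp [he, Pi.single_eq_of_ne this]
    have htail : (∑' r : ℕ, ENNReal.ofReal (ϑ (r + 1))) = ⊤ := by
      by_contra h
      have := tsum_eq_zero_add' (f := fun r => ENNReal.ofReal (ϑ r)) ENNReal.summable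
      rw [hdiv] at this
      have : (⊤ : ℝ≥0∞) = ENNReal.ofReal (ϑ 0) + ∑' r : ℕ, ENNReal.ofReal (ϑ (r + 1)) := this
      rw [eq_comm, ENNReal.add_eq_top] at this
      rcases this with h1 | h1
      · exact (ENNReal.ofReal_ne_top h1).elim
      · exact h h1
    have : (⊤ : ℝ≥0∞) ≤ ∑' q, ENNReal.ofReal (Ψ q) := by
      calc (⊤ : ℝ≥0∞) = ∑' r : ℕ, ENNReal.ofReal (ϑ (r + 1)) := htail.symm
        _ = ∑' r : ℕ, ENNReal.ofReal (Ψ (e r)) := by simp_rw [hval]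
        _ ≤ _ := hle
    exact top_le_iff.mp this
  · -- null measure
    set S : Set ℝ := {x : ℝ | x ∈ Ico (0:ℝ) 1 ∧
      {q : ℕ | 0 < q ∧ |(q : ℝ) * x - round ((q : ℝ) * x)| < ϑ q}.Infinite} with hS
    set T := toMeasurable volume S with hT
    have hTmeas : MeasurableSet T := measurableSet_toMeasurable _ _
    have hTnull : volume T = 0 := by rw [hT, measure_toMeasurable]; exact hnull
    have hsub : {x : Fin n → ℝ | (∀ i, x i ∈ Ico (0:ℝ) 1) ∧
        {q : Fin n → ℤ | q ≠ 0 ∧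
          |(∑ i, (q i : ℝ) * x i) - round (∑ i, (q i : ℝ) * x i)| < Ψ q}.Infinite} ⊆
        Set.pi univ (fun i => if i = i0 then T else Ico (0:ℝ) 1) := by
      rintro x ⟨hx1, hx2⟩
      intro i _
      by_cases hii : i = i0
      · simp only [hii, if_pos rfl]
        apply subset_toMeasurable
        refine ⟨hx1 i0, ?_⟩
        -- key reduction
        set Q := {q : Fin n → ℤ | q ≠ 0 ∧
          |(∑ i, (q i : ℝ) * x i) - round (∑ i, (q i : ℝ) * x i)| < Ψ q} with hQ
        -- every q in Q is supported at i0
        have hsupp : ∀ q ∈ Q, q i0 ≠ 0 ∧ (∀ j : Fin n, j.val ≠ 0 → q j = 0) := by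
          rintro q ⟨-, hq2⟩
          by_contra hcon
          rw [hΨ q, if_neg hcon] at hq2
          exact absurd hq2 (not_lt.mpr (abs_nonneg _))
        have hnorm : ∀ q ∈ Q, 0 < (q i0).natAbs ∧
            |((q i0).natAbs : ℝ) * x i0 - round (((q i0).natAbs : ℝ) * x i0)|
              < ϑ ((q i0).natAbs) := by
          intro q hq
          obtain ⟨hq0, hqz⟩ := hsupp q hq
          have hsum : (∑ i, (q i : ℝ) * x i) = (q i0 : ℝ) * x i0 := by
            apply Fintype.sum_eq_single
            intro j hj
            have : j.val ≠ 0 := by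
              intro h; apply hj; apply Fin.ext; simpa [hi0] using h
            rw [hqz j this]; simp
          have hq2 := hq.2
          rw [hΨ q, if_pos ⟨hq0, hqz⟩, hsum] at hq2
          refine ⟨by omega, ?_⟩
          rcases Int.natAbs_eq (q i0) with h | h
          · have hpos : (0:ℤ) ≤ q i0 := by omega
            have hcast : (((q i0).natAbs : ℕ) : ℝ) = ((q i0 : ℤ) : ℝ) := by
              rw [Nat.cast_natAbs, abs_of_nonneg (by exact_mod_cast hpos)]
            rw [hcast]
            exact hq2
          · have : ((q i0).natAbs : ℝ) * x i0 = -((q i0 : ℝ) * x i0) := by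
              have hneg : q i0 ≤ 0 := by omega
              have : ((q i0 : ℝ)) = -(((q i0).natAbs : ℝ)) := by
                rw [Nat.cast_natAbs, abs_of_nonpos (by exact_mod_cast hneg)]
                push_cast
                ring
              rw [this]; ring
            rw [this, abs_sub_round_neg]
            exact hq2
        -- map Q injectively into ℤ
        have hQ1 : ((fun q : Fin n → ℤ => q i0) '' Q).Infinite := by
          apply Set.Infinite.image _ hx2
          intro q hq q' hq' hqq'
          funext j
          by_cases hj : j = i0
          · rw [hj]; exact hqq'
          · have hjv : j.val ≠ 0 := by
              intro h; apply hj; apply Fin.ext; simpa [hi0] using h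
            rw [(hsupp q hq).2 j hjv, (hsupp q' hq').2 j hjv]
        -- conclude infinitude over ℕ
        by_contra hfin
        rw [Set.not_infinite] at hfin
        apply hQ1
        have himg : (fun q : Fin n → ℤ => q i0) '' Q ⊆
            (fun m : ℕ => (m : ℤ)) '' {q : ℕ | 0 < q ∧
              |(q : ℝ) * x i0 - round ((q : ℝ) * x i0)| < ϑ q} ∪
            (fun m : ℕ => -(m : ℤ)) '' {q : ℕ | 0 < q ∧
              |(q : ℝ) * x i0 - round ((q : ℝ) * x i0)| < ϑ q} := by
          rintro k ⟨q, hq, rfl⟩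
          have hk := hnorm q hq
          rcases Int.natAbs_eq (q i0) with h | h
          · left; exact ⟨(q i0).natAbs, hk, h.symm⟩
          · right; exact ⟨(q i0).natAbs, hk, h.symm⟩
        exact Set.Finite.subset ((hfin.image _).union (hfin.image _)) himg
      · simp only [if_neg hii]
        exact hx1 i
    refine measure_mono_null hsub ?_
    have : volume (Set.pi univ (fun i => if i = i0 then T else Ico (0:ℝ) 1)) =
        ∏ i, volume (if i = i0 then T else Ico (0:ℝ) 1) := volume_pi_pi _
    rw [this]
    apply Finset.prod_eq_zero (Finset.mem_univ i0)
    simp [hTnull]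
end

section
/- Let x be irrational and let ψ_ε(r) = ε/r for a fixed ε > 0. Suppose for every irrational x there are infinitely many q ∈ ℕ with ‖qx - b‖ < (1+ε')/(√5·q) for any real b and ε' > 0 (Khintchine's inhomogeneous theorem). Then for any irrational x and almost every b ∈ [0,1], liminf_{q→∞} q·‖qx - b‖ = 0. -/
open MeasureTheory Set

noncomputable def kimGood (ξ : AddCircle (1:ℝ)) (δ : ℝ) : Set (AddCircle (1:ℝ)) :=
  {β | ∀ m : ℕ, {q : ℕ | 0 < q ∧ (q:ℝ) * ‖q • ξ - β‖ < δ + 1/(m+1)}.Infinite}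

lemma kim_norm_coe_le_abs (y : ℝ) (m : ℤ) : ‖((y:ℝ) : AddCircle (1:ℝ))‖ ≤ |y - m| := by
  have h0 : (((m:ℝ)) : AddCircle (1:ℝ)) = 0 := by
    rw [AddCircle.coe_eq_zero_iff]; exact ⟨m, by simp⟩
  calc ‖((y:ℝ) : AddCircle (1:ℝ))‖ = ‖((y - (m:ℝ) : ℝ) : AddCircle (1:ℝ))‖ := by
        rw [AddCircle.coe_sub, h0, sub_zero]
    _ ≤ ‖(y - (m:ℝ))‖ := QuotientAddGroup.norm_mk_le_norm
    _ = |y - (m:ℝ)| := Real.norm_eq_abs _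

set_option maxHeartbeats 1000000 in
lemma kim_norm_eq (x b : ℝ) (q : ℕ) :
    ‖q • ((x:ℝ) : AddCircle (1:ℝ)) - ((b:ℝ) : AddCircle (1:ℝ))‖ =
      |(q:ℝ)*x - b - round ((q:ℝ)*x - b)| := by
  have h : q • ((x:ℝ) : AddCircle (1:ℝ)) - ((b:ℝ) : AddCircle (1:ℝ))
      = (((q:ℝ)*x - b : ℝ) : AddCircle (1:ℝ)) := by
    rw [AddCircle.coe_sub, ← AddCircle.coe_nsmul, nsmul_eq_mul]
  rw [h, UnitAddCircle.norm_eq]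

lemma kimGood_measurable (ξ : AddCircle (1:ℝ)) (δ : ℝ) : MeasurableSet (kimGood ξ δ) := by
  have hrw : kimGood ξ δ = ⋂ m : ℕ, ⋂ k : ℕ, ⋃ q : ℕ, ⋃ (_ : 0 < q ∧ k < q),
      {β : AddCircle (1:ℝ) | (q:ℝ) * ‖q • ξ - β‖ < δ + 1/(m+1)} := by
    ext β
    simp only [kimGood, mem_setOf_eq, mem_iInter, mem_iUnion]
    constructor
    · intro h m k
      obtain ⟨q, hq, hk⟩ := (h m).exists_gt k
      exact ⟨q, ⟨hq.1, hk⟩, hq.2⟩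
    · intro h m
      apply Set.infinite_of_forall_exists_gt
      intro k
      obtain ⟨q, ⟨hq0, hk⟩, hlt⟩ := h m k
      exact ⟨q, ⟨hq0, hlt⟩, hk⟩
  rw [hrw]
  refine MeasurableSet.iInter fun m => MeasurableSet.iInter fun k =>
    MeasurableSet.iUnion fun q => MeasurableSet.iUnion fun _ => ?_
  have hc : Continuous fun β : AddCircle (1:ℝ) => (q:ℝ) * ‖q • ξ - β‖ :=
    (continuous_const.mul ((continuous_const.sub continuous_id).norm))
  exact measurableSet_lt hc.measurable measurable_const

lemma kimGood_invariant (ξ : AddCircle (1:ℝ)) {δ : ℝ} (hδ : 0 < δ) :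
    (fun β => ξ + β) ⁻¹' kimGood ξ δ = kimGood ξ δ := by
  ext β
  simp only [mem_preimage]
  constructor
  · intro h m
    have hfin : {q : ℕ | q < 2}.Finite := Set.finite_Iio 2
    have hinf := (h m).diff hfin
    have himg := hinf.image (f := fun q => q - 1)
      (fun a ha b hb hab => by
        simp only [mem_diff, mem_setOf_eq, not_lt] at ha hb
        dsimp only at hab
        omega)
    refine himg.mono ?_
    rintro _ ⟨q, hq, rfl⟩
    dsimp only
    simp only [mem_diff, mem_setOf_eq, not_lt] at hq
    obtain ⟨⟨hq0, hlt⟩, hq2⟩ := hq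
    have hkey : q • ξ - (ξ + β) = (q - 1) • ξ - β := by
      have hq' : q = (q - 1) + 1 := by omega
      rw [hq', succ_nsmul]
      abel_nf
      rw [add_comm]
    rw [hkey] at hlt
    refine ⟨by omega, lt_of_le_of_lt ?_ hlt⟩
    have hle : ((q - 1 : ℕ) : ℝ) ≤ (q : ℝ) := by exact_mod_cast Nat.sub_le q 1
    exact mul_le_mul_of_nonneg_right hle (norm_nonneg _)
  · intro h m
    set B : ℕ := ⌈2 * ((m:ℝ) + 1) * (δ + 1)⌉₊ with hBdef
    have hfin : {q : ℕ | q < B + 1}.Finite := Set.finite_Iio _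
    have hinf := (h (2*m+1)).diff hfin
    have himg := hinf.image (f := fun q => q + 1)
      (fun a _ b _ hab => by dsimp only at hab; omega)
    refine himg.mono ?_
    rintro _ ⟨q, hq, rfl⟩
    dsimp only
    simp only [mem_diff, mem_setOf_eq, not_lt] at hq
    obtain ⟨⟨hq0, hlt⟩, hqB⟩ := hq
    have hkey : (q + 1) • ξ - (ξ + β) = q • ξ - β := by
      rw [succ_nsmul]; abel
    refine ⟨by omega, ?_⟩
    rw [hkey]
    set a := ‖q • ξ - β‖ with hadef
    have ha0 : 0 ≤ a := norm_nonneg _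
    have hcast : ((2*m+1 : ℕ) : ℝ) + 1 = 2 * ((m:ℝ) + 1) := by push_cast; ring
    rw [hcast] at hlt
    have hm1 : (0:ℝ) < (m:ℝ) + 1 := by positivity
    have hBq : 2 * ((m:ℝ) + 1) * (δ + 1) ≤ (q : ℝ) := by
      calc 2 * ((m:ℝ) + 1) * (δ + 1) ≤ (B : ℝ) := Nat.le_ceil _
        _ ≤ (q : ℝ) := by exact_mod_cast Nat.le_of_lt_succ (Nat.lt_succ_of_le (by omega))
    have hθ : (1:ℝ)/(2 * ((m:ℝ) + 1)) ≤ 1 := by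
      rw [div_le_one (by positivity)]; nlinarith
    have ha_small : a ≤ 1 / (2 * ((m:ℝ) + 1)) := by
      by_contra hcon
      push_neg at hcon
      have h1 : (q:ℝ) * a < δ + 1 := lt_of_lt_of_le hlt (by linarith)
      have h2 : 1 < a * (2 * ((m:ℝ) + 1)) := (div_lt_iff₀ (by positivity)).mp hcon
      nlinarith [mul_le_mul_of_nonneg_right hBq ha0]
    have hsum : (1:ℝ)/(2 * ((m:ℝ) + 1)) + 1/(2 * ((m:ℝ) + 1)) = 1/((m:ℝ)+1) := by
      rw [← add_div, one_add_one_eq_two,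
        div_eq_div_iff (by positivity : (0:ℝ) < 2*((m:ℝ)+1)).ne' (by positivity : (0:ℝ) < (m:ℝ)+1).ne']
      ring
    have hmul : ((q:ℝ) + 1) * a = (q:ℝ) * a + a := by ring
    push_cast
    rw [hmul]
    calc (q:ℝ) * a + a < δ + 1/(2*((m:ℝ)+1)) + 1/(2*((m:ℝ)+1)) := by linarith
      _ = δ + 1/((m:ℝ)+1) := by rw [add_assoc, hsum]

lemma kim_exists_fiber_infinite {S : Set ℕ} (hS : S.Infinite) (f : ℕ → ℕ) (N : ℕ)
    (hf : ∀ q ∈ S, f q < N) : ∃ r, r < N ∧ {q ∈ S | f q = r}.Infinite := by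
  by_contra h
  push_neg at h
  have hsub : S ⊆ ⋃ r ∈ Finset.range N, {q ∈ S | f q = r} := by
    intro q hq
    exact mem_biUnion (Finset.mem_range.mpr (hf q hq)) ⟨hq, rfl⟩
  have hfin : (⋃ r ∈ Finset.range N, {q ∈ S | f q = r}).Finite :=
    Set.Finite.biUnion (Finset.range N).finite_toSet
      (fun r hr => h r (Finset.mem_range.mp hr))
  exact hS (hfin.subset hsub)

set_option maxHeartbeats 1000000 in
lemma kimPigeon (x b : ℝ) (N : ℕ) (hN : 0 < N)
    (hS : {q : ℕ | 0 < q ∧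
        |(q : ℝ) * ((N:ℝ)*x) - (N:ℝ)*b - round ((q : ℝ) * ((N:ℝ)*x) - (N:ℝ)*b)| <
          (1 + 1) / (Real.sqrt 5 * q)}.Infinite) :
    ∃ r : ℕ, r < N ∧
      ((b : ℝ) : AddCircle (1:ℝ)) + ((((r:ℝ)/(N:ℝ)) : ℝ) : AddCircle (1:ℝ)) ∈
        kimGood ((x : ℝ) : AddCircle (1:ℝ)) (2/(Real.sqrt 5 * N)) := by
  have hc : (0:ℝ) < Real.sqrt 5 := Real.sqrt_pos.mpr (by norm_num)
  have hN' : (0:ℝ) < (N:ℝ) := by exact_mod_cast hN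
  set f : ℕ → ℕ := fun q => ((round ((q : ℝ) * ((N:ℝ)*x) - (N:ℝ)*b)) % (N:ℤ)).toNat with hfdef
  have hfN : ∀ q, f q < N := by
    intro q
    have h1 : 0 ≤ (round ((q : ℝ) * ((N:ℝ)*x) - (N:ℝ)*b)) % (N:ℤ) :=
      Int.emod_nonneg _ (by exact_mod_cast hN.ne')
    have h2 : (round ((q : ℝ) * ((N:ℝ)*x) - (N:ℝ)*b)) % (N:ℤ) < (N:ℤ) :=
      Int.emod_lt_of_pos _ (by exact_mod_cast hN)
    simp only [hfdef]
    omega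
  obtain ⟨r, hrN, hinf⟩ := kim_exists_fiber_infinite hS f N (fun q _ => hfN q)
  refine ⟨r, hrN, ?_⟩
  intro m
  refine hinf.mono ?_
  rintro q ⟨⟨hq0, habs⟩, hfq⟩
  have hq' : (0:ℝ) < (q:ℝ) := by exact_mod_cast hq0
  set p : ℤ := round ((q : ℝ) * ((N:ℝ)*x) - (N:ℝ)*b) with hpdef
  have hmod : p % (N:ℤ) = (r:ℤ) := by
    have h1 : 0 ≤ p % (N:ℤ) := Int.emod_nonneg _ (by exact_mod_cast hN.ne')
    simp only [hfdef, ← hpdef] at hfq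
    omega
  set M : ℤ := p / (N:ℤ) with hMdef
  have hpM : p = (N:ℤ) * M + (r:ℤ) := by
    rw [← hmod, hMdef]
    exact (Int.mul_ediv_add_emod p (N:ℤ)).symm
  have hy : q • ((x:ℝ) : AddCircle (1:ℝ)) - (((b : ℝ) : AddCircle (1:ℝ)) + (((r:ℝ)/(N:ℝ) : ℝ) : AddCircle (1:ℝ)))
      = ((((q:ℝ)*x - (b + (r:ℝ)/(N:ℝ)) : ℝ)) : AddCircle (1:ℝ)) := by
    rw [AddCircle.coe_sub, AddCircle.coe_add, ← AddCircle.coe_nsmul, nsmul_eq_mul]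
  have hdiff : ((q:ℝ)*x - (b + (r:ℝ)/(N:ℝ)) - (M:ℝ))
      = ((q : ℝ) * ((N:ℝ)*x) - (N:ℝ)*b - (p:ℝ)) / (N:ℝ) := by
    have hpr : (p:ℝ) = (N:ℝ) * (M:ℝ) + (r:ℝ) := by exact_mod_cast congrArg (Int.cast : ℤ → ℝ) hpM
    field_simp [hpr]
    rw [hpr]; ring
  have hbound : ‖q • ((x:ℝ) : AddCircle (1:ℝ)) - (((b : ℝ) : AddCircle (1:ℝ)) + (((r:ℝ)/(N:ℝ) : ℝ) : AddCircle (1:ℝ)))‖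
      ≤ |(q : ℝ) * ((N:ℝ)*x) - (N:ℝ)*b - (p:ℝ)| / (N:ℝ) := by
    rw [hy]
    calc ‖((((q:ℝ)*x - (b + (r:ℝ)/(N:ℝ)) : ℝ)) : AddCircle (1:ℝ))‖
        ≤ |(q:ℝ)*x - (b + (r:ℝ)/(N:ℝ)) - (M:ℝ)| := kim_norm_coe_le_abs _ M
      _ = |((q : ℝ) * ((N:ℝ)*x) - (N:ℝ)*b - (p:ℝ)) / (N:ℝ)| := by rw [hdiff]
      _ = |(q : ℝ) * ((N:ℝ)*x) - (N:ℝ)*b - (p:ℝ)| / (N:ℝ) := by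
          rw [abs_div, abs_of_pos hN']
  refine ⟨hq0, ?_⟩
  have hstep : (q:ℝ) * (|(q : ℝ) * ((N:ℝ)*x) - (N:ℝ)*b - (p:ℝ)| / (N:ℝ)) < 2/(Real.sqrt 5 * (N:ℝ)) := by
    have h2 : |(q : ℝ) * ((N:ℝ)*x) - (N:ℝ)*b - (p:ℝ)| < (1+1) / (Real.sqrt 5 * q) := habs
    have heq : (q:ℝ) * (((1+1) / (Real.sqrt 5 * (q:ℝ))) / (N:ℝ)) = 2/(Real.sqrt 5 * (N:ℝ)) := by
      field_simp
      ring
    calc (q:ℝ) * (|(q : ℝ) * ((N:ℝ)*x) - (N:ℝ)*b - (p:ℝ)| / (N:ℝ))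
        < (q:ℝ) * (((1+1) / (Real.sqrt 5 * (q:ℝ))) / (N:ℝ)) := by
          gcongr
      _ = 2/(Real.sqrt 5 * (N:ℝ)) := heq
  have hpos : (0:ℝ) < 1/((m:ℝ)+1) := by positivity
  calc (q:ℝ) * ‖q • ((x:ℝ) : AddCircle (1:ℝ)) - (((b : ℝ) : AddCircle (1:ℝ)) + (((r:ℝ)/(N:ℝ) : ℝ) : AddCircle (1:ℝ)))‖
      ≤ (q:ℝ) * (|(q : ℝ) * ((N:ℝ)*x) - (N:ℝ)*b - (p:ℝ)| / (N:ℝ)) :=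
        mul_le_mul_of_nonneg_left hbound hq'.le
    _ < 2/(Real.sqrt 5 * (N:ℝ)) := hstep
    _ ≤ 2/(Real.sqrt 5 * (N:ℝ)) + 1/((m:ℝ)+1) := by linarith
set_option maxHeartbeats 1000000 in
lemma dense_zsmul (x : ℝ) (hx : Irrational x) :
    DenseRange (fun n : ℤ => n • ((x : ℝ) : AddCircle (1:ℝ))) := by
  have hS : Dense ((AddSubgroup.closure {x, 1} : AddSubgroup ℝ) : Set ℝ) := by
    rcases AddSubgroup.dense_or_cyclic (AddSubgroup.closure {x, 1}) with h | ⟨a, ha⟩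
    · exact h
    · exfalso
      have hx1 : x ∈ AddSubgroup.closure ({x, 1} : Set ℝ) :=
        AddSubgroup.subset_closure (by simp)
      have h1 : (1:ℝ) ∈ AddSubgroup.closure ({x, 1} : Set ℝ) :=
        AddSubgroup.subset_closure (by simp)
      rw [ha] at hx1 h1
      obtain ⟨n, hn⟩ := AddSubgroup.mem_closure_singleton.mp hx1
      obtain ⟨m, hm⟩ := AddSubgroup.mem_closure_singleton.mp h1
      rw [zsmul_eq_mul] at hn hm
      have hm0 : (m : ℝ) ≠ 0 := by
        rintro h0; rw [h0, zero_mul] at hm; exact one_ne_zero hm.symm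
      have hxa : x = (n : ℝ) / (m : ℝ) := by
        have h2 : (n:ℝ) * a * (m:ℝ) = (n:ℝ) * ((m:ℝ) * a) := by ring
        field_simp [← hn]
        rw [← hn, h2, hm, mul_one]
      exact hx ⟨(n : ℚ) / (m : ℚ), by push_cast; rw [hxa]⟩
  have hmk : Continuous ((↑) : ℝ → AddCircle (1:ℝ)) := continuous_quotient_mk'
  have hsurj : Function.Surjective ((↑) : ℝ → AddCircle (1:ℝ)) :=
    QuotientAddGroup.mk_surjective
  have hd : Dense (((↑) : ℝ → AddCircle (1:ℝ)) ''
      ((AddSubgroup.closure {x, 1} : AddSubgroup ℝ) : Set ℝ)) :=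
    hsurj.denseRange.dense_image hmk hS
  refine hd.mono ?_
  rintro _ ⟨y, hy, rfl⟩
  obtain ⟨n, m, rfl⟩ := AddSubgroup.mem_closure_pair.mp hy
  have key : ((n • x + m • (1:ℝ) : ℝ) : AddCircle (1:ℝ)) = n • ((x:ℝ) : AddCircle (1:ℝ)) := by
    rw [AddCircle.coe_add, AddCircle.coe_zsmul, AddCircle.coe_zsmul, AddCircle.coe_period,
      smul_zero, add_zero]
  exact ⟨n, key.symm⟩

set_option maxHeartbeats 2000000 in
theorem kim_theorem
    (hKh : ∀ x : ℝ, Irrational x → ∀ b : ℝ, ∀ ε' : ℝ, 0 < ε' →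
      {q : ℕ | 0 < q ∧
        |(q : ℝ) * x - b - round ((q : ℝ) * x - b)| <
          (1 + ε') / (Real.sqrt 5 * q)}.Infinite) :
    ∀ x : ℝ, Irrational x →
      ∀ᵐ b ∂(volume.restrict (Icc (0:ℝ) 1)), ∀ ε : ℝ, 0 < ε →
        {q : ℕ | 0 < q ∧
          (q : ℝ) * |(q : ℝ) * x - b - round ((q : ℝ) * x - b)| < ε}.Infinite := by
  intro x hx
  have hc2 : (2:ℝ) ≤ Real.sqrt 5 := by
    nlinarith [Real.sq_sqrt (by norm_num : (0:ℝ) ≤ 5), Real.sqrt_nonneg 5]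
  have hc : (0:ℝ) < Real.sqrt 5 := by linarith
  have herg : Ergodic (fun β => ((x:ℝ) : AddCircle (1:ℝ)) + β) volume :=
    ergodic_add_left_of_denseRange_zsmul (dense_zsmul x hx) volume
  have hconull : ∀ n : ℕ, ∀ᵐ β ∂(volume : Measure (AddCircle (1:ℝ))),
      β ∈ kimGood ((x:ℝ) : AddCircle (1:ℝ)) (2/(Real.sqrt 5 * ((n+1 : ℕ) : ℝ))) := by
    intro n
    have hNpos : 0 < n + 1 := Nat.succ_pos n
    have hN' : (0:ℝ) < ((n+1 : ℕ) : ℝ) := by exact_mod_cast hNpos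
    have hδ : (0:ℝ) < 2/(Real.sqrt 5 * ((n+1 : ℕ) : ℝ)) := by positivity
    rcases herg.ae_empty_or_univ (kimGood_measurable _ _) (kimGood_invariant _ hδ) with h0 | h1
    · exfalso
      have hGnull : volume (kimGood ((x:ℝ) : AddCircle (1:ℝ))
          (2/(Real.sqrt 5 * ((n+1 : ℕ) : ℝ)))) = 0 := ae_eq_empty.mp h0
      have hcov : (univ : Set (AddCircle (1:ℝ))) ⊆
          ⋃ r ∈ Finset.range (n+1),
            (fun β => (((r:ℝ)/((n+1 : ℕ):ℝ) : ℝ) : AddCircle (1:ℝ)) + β) ⁻¹'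
              kimGood ((x:ℝ) : AddCircle (1:ℝ)) (2/(Real.sqrt 5 * ((n+1 : ℕ) : ℝ))) := by
        rintro β -
        obtain ⟨b, rfl⟩ := QuotientAddGroup.mk_surjective β
        obtain ⟨r, hrN, hmem⟩ := kimPigeon x b (n+1) hNpos
          (hKh (((n+1:ℕ):ℝ)*x) (hx.natCast_mul (by exact_mod_cast hNpos.ne'))
            (((n+1:ℕ):ℝ)*b) 1 one_pos)
        refine mem_biUnion (Finset.mem_range.mpr hrN) ?_
        simp only [mem_preimage]
        rw [add_comm ((((r:ℝ)/((n+1 : ℕ):ℝ) : ℝ) : AddCircle (1:ℝ))) (((b:ℝ) : AddCircle (1:ℝ)))]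
        exact hmem
      have hzero : volume (univ : Set (AddCircle (1:ℝ))) = 0 := by
        refine measure_mono_null hcov ?_
        refine le_antisymm ?_ (zero_le)
        calc volume (⋃ r ∈ Finset.range (n+1),
              (fun β => (((r:ℝ)/((n+1 : ℕ):ℝ) : ℝ) : AddCircle (1:ℝ)) + β) ⁻¹'
                kimGood ((x:ℝ) : AddCircle (1:ℝ)) (2/(Real.sqrt 5 * ((n+1 : ℕ) : ℝ))))
            ≤ ∑ r ∈ Finset.range (n+1), volume
              ((fun β => (((r:ℝ)/((n+1 : ℕ):ℝ) : ℝ) : AddCircle (1:ℝ)) + β) ⁻¹'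
                kimGood ((x:ℝ) : AddCircle (1:ℝ)) (2/(Real.sqrt 5 * ((n+1 : ℕ) : ℝ)))) :=
              measure_biUnion_finset_le _ _
          _ = 0 := Finset.sum_eq_zero fun r _ => by
              rw [(measurePreserving_add_left volume _).measure_preimage
                (kimGood_measurable _ _).nullMeasurableSet]
              exact hGnull
      rw [AddCircle.measure_univ] at hzero
      simp at hzero
    · exact ae_iff.mpr (ae_eq_univ.mp h1)
  have hae : ∀ᵐ β ∂(volume : Measure (AddCircle (1:ℝ))),
      ∀ n : ℕ, β ∈ kimGood ((x:ℝ) : AddCircle (1:ℝ)) (2/(Real.sqrt 5 * ((n+1 : ℕ) : ℝ))) :=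
    ae_all_iff.mpr hconull
  have hmp := AddCircle.measurePreserving_mk (T := (1:ℝ)) 0
  rw [zero_add] at hmp
  have key : ∀ᵐ b ∂(volume.restrict (Ioc (0:ℝ) 1)),
      ∀ n : ℕ, ((b:ℝ) : AddCircle (1:ℝ)) ∈
        kimGood ((x:ℝ) : AddCircle (1:ℝ)) (2/(Real.sqrt 5 * ((n+1 : ℕ) : ℝ))) := by
    rw [ae_iff] at hae ⊢
    exact hmp.quasiMeasurePreserving.preimage_null hae
  have hres : volume.restrict (Icc (0:ℝ) 1) = volume.restrict (Ioc (0:ℝ) 1) :=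
    Measure.restrict_congr_set Ioc_ae_eq_Icc.symm
  rw [hres]
  filter_upwards [key] with b hb ε hε
  obtain ⟨n, hn⟩ := exists_nat_gt (2/ε)
  have hset := hb n n
  refine hset.mono ?_
  rintro q ⟨hq0, hlt⟩
  refine ⟨hq0, ?_⟩
  rw [kim_norm_eq x b q] at hlt
  refine hlt.trans_le ?_
  have hn1 : (0:ℝ) < (n:ℝ) + 1 := by positivity
  have hεn : 2 < (n:ℝ) * ε := (div_lt_iff₀ hε).mp hn
  have hA : 2/(Real.sqrt 5 * ((n+1 : ℕ):ℝ)) ≤ 1/((n:ℝ)+1) := by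
    push_cast
    rw [div_le_div_iff₀ (by positivity) (by positivity)]
    nlinarith
  have hB : 1/((n:ℝ)+1) + 1/((n:ℝ)+1) ≤ ε := by
    rw [← add_div, div_le_iff₀ hn1]
    nlinarith
  linarith
end

section
/- For every irrational real number x and every real number b, there are infinitely many integers q ≥ 1 such that ‖q·x - b‖ < 3/q. -/
open Set

/-- Rationals with bounded denominator near a real number form a finite set. -/
lemma finite_bounded_den (x : ℝ) (D : ℕ) :
    {r : ℚ | |x - (r : ℝ)| < 1 ∧ r.den ≤ D}.Finite := by
  set M : ℤ := ⌈(|x| + 1) * D⌉ with hM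
  apply Set.Finite.of_finite_image (f := fun r : ℚ => (r.num, r.den))
  · apply Set.Finite.subset (Set.finite_Icc (-M, 0) (M, D))
    rintro ⟨n, d⟩ ⟨r, ⟨hr1, hr2⟩, hrnd⟩
    simp only [Prod.mk.injEq] at hrnd
    obtain ⟨rfl, rfl⟩ := hrnd
    have hden : (1:ℝ) ≤ r.den := by exact_mod_cast r.pos
    have hrb : |(r : ℝ)| ≤ |x| + 1 := by
      have := abs_sub_abs_le_abs_sub (r : ℝ) x
      rw [abs_sub_comm] at hr1
      linarith
    have hnum : |(r.num : ℝ)| ≤ (|x| + 1) * D := by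
      have h1 : (r.num : ℝ) = (r : ℝ) * r.den := by
        rw [Rat.cast_def]; field_simp
      rw [h1, abs_mul, abs_of_nonneg (by positivity : (0:ℝ) ≤ (r.den : ℝ))]
      have hdD : (r.den : ℝ) ≤ D := by exact_mod_cast hr2
      have : (0:ℝ) ≤ |x| + 1 := by positivity
      nlinarith [abs_nonneg (r : ℝ)]
    have hnum' : |r.num| ≤ M := by
      have : ((|r.num| : ℤ) : ℝ) ≤ (M : ℝ) := by
        push_cast
        exact hnum.trans (Int.le_ceil _)
      exact_mod_cast this
    constructor
    · exact ⟨by simpa using (abs_le.mp hnum').1, Nat.zero_le _⟩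
    · exact ⟨(abs_le.mp hnum').2, hr2⟩
  · intro r _ s _ h
    simp only [Prod.mk.injEq] at h
    exact Rat.ext h.1 h.2

theorem tchebychef (x : ℝ) (hx : Irrational x) (b : ℝ) :
    {q : ℕ | 0 < q ∧
      |(q : ℝ) * x - b - round ((q : ℝ) * x - b)| < 3 / q}.Infinite := by
  set T := {q : ℕ | 0 < q ∧
      |(q : ℝ) * x - b - round ((q : ℝ) * x - b)| < 3 / q} with hT
  have hS := Real.infinite_rat_abs_sub_lt_one_div_den_sq_of_irrational hx
  -- Step 1: good approximations with arbitrarily large denominators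
  have hbig : ∀ N : ℕ, ∃ r : ℚ, |x - (r : ℝ)| < 1 / (r.den : ℝ) ^ 2 ∧ N < r.den := by
    intro N
    by_contra hcon
    push_neg at hcon
    apply hS
    apply Set.Finite.subset (finite_bounded_den x N)
    intro r hr
    have hr' : |x - (r : ℝ)| < 1 / (r.den : ℝ) ^ 2 := hr
    have hden : (1:ℝ) ≤ (r.den : ℝ) := by exact_mod_cast r.pos
    refine ⟨lt_of_lt_of_le hr' ?_, hcon r hr'⟩
    rw [div_le_one (by positivity)]
    nlinarith
  -- Step 2: arbitrarily large members of T
  have key : ∀ N : ℕ, ∃ q ∈ T, N < q := by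
    intro N
    obtain ⟨r, hr1, hrN⟩ := hbig (2 * N)
    set d : ℤ := (r.den : ℤ) with hdd
    set p : ℤ := r.num with hpp
    have hd0 : 0 < d := by rw [hdd]; exact_mod_cast r.pos
    have hd0' : (0:ℝ) < (d:ℝ) := by exact_mod_cast hd0
    have hNd : (2 * N + 1 : ℝ) ≤ (d:ℝ) := by
      have h : 2 * N + 1 ≤ r.den := hrN
      rw [hdd]; exact_mod_cast h
    have hxd : |(d:ℝ) * x - (p:ℝ)| < 1 / (d:ℝ) := by
      have hcast : (r : ℝ) = (p:ℝ) / (d:ℝ) := by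
        rw [Rat.cast_def]; rfl
      have heq : (d:ℝ) * x - (p:ℝ) = (d:ℝ) * (x - (r:ℝ)) := by
        rw [hcast]; field_simp
      rw [heq, abs_mul, abs_of_pos hd0']
      have hr1' : |x - (r:ℝ)| < 1 / (d:ℝ) ^ 2 := by
        rw [hdd]; push_cast; exact hr1
      calc (d:ℝ) * |x - (r:ℝ)| < (d:ℝ) * (1 / (d:ℝ)^2) :=
            mul_lt_mul_of_pos_left hr1' hd0'
        _ = 1 / (d:ℝ) := by field_simp
    have hcop : IsCoprime p d := by
      rw [Int.isCoprime_iff_gcd_eq_one]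
      simpa [Int.gcd, hdd, hpp] using r.reduced
    obtain ⟨a, c, hac⟩ := hcop
    set m : ℤ := round ((d:ℝ) * b) with hm
    have hmb : |(d:ℝ) * b - (m:ℝ)| ≤ 1 / 2 := abs_sub_round _
    set k : ℤ := ⌈((m * a : ℤ) : ℝ) / (d:ℝ) - 3 / 2⌉ with hk
    set v : ℤ := m * a - k * d with hv
    have hceil1 : ((m * a : ℤ) : ℝ) / (d:ℝ) - 3 / 2 ≤ (k:ℝ) := Int.le_ceil _
    have hceil2 : (k:ℝ) < ((m * a : ℤ) : ℝ) / (d:ℝ) - 3 / 2 + 1 := Int.ceil_lt_add_one _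
    have hvr : (v:ℝ) = (m:ℝ) * (a:ℝ) - (k:ℝ) * (d:ℝ) := by push_cast [hv]; ring
    have hv2 : (v:ℝ) ≤ 3 * (d:ℝ) / 2 := by
      have h1 : (m:ℝ) * (a:ℝ) / (d:ℝ) ≤ (k:ℝ) + 3 / 2 := by
        push_cast at hceil1; linarith
      have h1' : (m:ℝ) * (a:ℝ) ≤ ((k:ℝ) + 3 / 2) * (d:ℝ) := (div_le_iff₀ hd0').mp h1
      rw [hvr]; nlinarith
    have hv1 : (d:ℝ) / 2 < (v:ℝ) := by
      have h2 : (k:ℝ) + 1 / 2 < (m:ℝ) * (a:ℝ) / (d:ℝ) := by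
        push_cast at hceil2; linarith
      have h2' : ((k:ℝ) + 1 / 2) * (d:ℝ) < (m:ℝ) * (a:ℝ) := (lt_div_iff₀ hd0').mp h2
      rw [hvr]; nlinarith
    have hvpos : (0:ℝ) < (v:ℝ) := lt_of_le_of_lt (by positivity) hv1
    have hv0 : 0 < v := by exact_mod_cast hvpos
    set u : ℤ := -(m * c + k * p) with hu
    have hid : v * p - d * u = m := by
      have h1 : v * p - d * u = m * (a * p + c * d) := by rw [hv, hu]; ring
      rw [h1, hac, mul_one]
    have hidr : (v:ℝ) * (p:ℝ) - (d:ℝ) * (u:ℝ) = (m:ℝ) := by exact_mod_cast hid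
    have hbound : |(v:ℝ) * x - b - (u:ℝ)| < 3 / (v:ℝ) := by
      have hform : (v:ℝ) * x - b - (u:ℝ) =
          ((v:ℝ) * ((d:ℝ) * x - (p:ℝ)) + ((m:ℝ) - (d:ℝ) * b)) / (d:ℝ) := by
        rw [eq_div_iff hd0'.ne']
        linear_combination hidr
      rw [hform, abs_div, abs_of_pos hd0']
      have h3 : |(m:ℝ) - (d:ℝ) * b| ≤ 1 / 2 := by rw [abs_sub_comm]; exact hmb
      have habs := abs_add_le ((v:ℝ) * ((d:ℝ) * x - (p:ℝ))) ((m:ℝ) - (d:ℝ) * b)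
      have h4 : |(v:ℝ) * ((d:ℝ) * x - (p:ℝ))| = (v:ℝ) * |(d:ℝ) * x - (p:ℝ)| := by
        rw [abs_mul, abs_of_pos hvpos]
      have hnum : |(v:ℝ) * ((d:ℝ) * x - (p:ℝ)) + ((m:ℝ) - (d:ℝ) * b)| < 2 := by
        have h5 : (v:ℝ) * |(d:ℝ) * x - (p:ℝ)| < (v:ℝ) * (1 / (d:ℝ)) :=
          mul_lt_mul_of_pos_left hxd hvpos
        have h6 : (v:ℝ) * (1 / (d:ℝ)) ≤ 3 / 2 := by
          rw [mul_one_div, div_le_iff₀ hd0']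
          linarith
        linarith [habs, h4.le, h4.ge]
      rw [div_lt_div_iff₀ hd0' hvpos]
      have h7 : |(v:ℝ) * ((d:ℝ) * x - (p:ℝ)) + ((m:ℝ) - (d:ℝ) * b)| * (v:ℝ) < 2 * (v:ℝ) :=
        mul_lt_mul_of_pos_right hnum hvpos
      linarith
    have hqv : ((v.toNat : ℕ) : ℝ) = (v:ℝ) := by
      exact_mod_cast Int.toNat_of_nonneg hv0.le
    refine ⟨v.toNat, ⟨?_, ?_⟩, ?_⟩
    · omega
    · rw [hqv]
      exact lt_of_le_of_lt (round_le ((v:ℝ) * x - b) u) hbound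
    · have hNv : (N:ℝ) < (v:ℝ) := by nlinarith
      have : (N:ℤ) < v := by exact_mod_cast hNv
      omega
  apply Set.infinite_of_not_bddAbove
  rintro ⟨M, hM⟩
  obtain ⟨q, hq, hMq⟩ := key M
  exact absurd (hM hq) (by omega)
end

section
/- Let τ > 1. The set A(τ) = {x ∈ [0,1) : ‖qx‖ < q^{-τ} for infinitely many q ∈ ℕ} satisfies: for every s > 2/(τ+1), the s-dimensional Hausdorff measure H^s(A(τ)) = 0. Consequently dim_H A(τ) ≤ 2/(τ+1). -/
open MeasureTheory Set
open scoped ENNReal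

private lemma jb_aux (τ : ℝ) (hτ : 1 < τ) (s : ℝ) (hs : 2 / (τ + 1) < s) :
    μH[s] {x : ℝ | x ∈ Ico (0:ℝ) 1 ∧
      {q : ℕ | 0 < q ∧
        |(q : ℝ) * x - round ((q : ℝ) * x)| < (q : ℝ) ^ (-τ)}.Infinite} = 0 := by
  have hτ1 : (0:ℝ) < τ + 1 := by linarith
  have hs0 : 0 < s := lt_of_le_of_lt (by positivity) hs
  set A := {x : ℝ | x ∈ Ico (0:ℝ) 1 ∧
      {q : ℕ | 0 < q ∧
        |(q : ℝ) * x - round ((q : ℝ) * x)| < (q : ℝ) ^ (-τ)}.Infinite} with hA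
  -- the radius
  set ρ : ℕ → ℝ := fun q => (q:ℝ) ^ (-(τ+1)) with hρ
  have hρ_nonneg : ∀ q, 0 ≤ ρ q := fun q => Real.rpow_nonneg (Nat.cast_nonneg q) _
  have hρ_pos : ∀ q : ℕ, 1 ≤ q → 0 < ρ q := fun q hq =>
    Real.rpow_pos_of_pos (by exact_mod_cast hq) _
  -- the covering sets
  set t : ℕ → ℕ × ℕ → Set ℝ := fun N i =>
    if i.2 ≤ i.1 + N ∧ 1 ≤ i.1 + N then
      Icc ((i.2:ℝ)/(i.1+N) - ρ (i.1+N)) ((i.2:ℝ)/(i.1+N) + ρ (i.1+N)) else ∅ with ht_def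
  set r : ℕ → ℝ≥0∞ := fun N => ENNReal.ofReal (2 * ρ N) with hr_def
  -- diameters
  have hdiam : ∀ N i, EMetric.diam (t N i) ≤ ENNReal.ofReal (2 * ρ (i.1 + N)) := by
    intro N i
    by_cases h : i.2 ≤ i.1 + N ∧ 1 ≤ i.1 + N
    · simp only [ht_def, if_pos h, EMetric.diam, Real.ediam_Icc]
      apply le_of_eq; congr 1; push_cast; ring
    · simp [ht_def, if_neg h, EMetric.diam]
  have hr0 : Filter.Tendsto r Filter.atTop (nhds 0) := by
    have h1 : Filter.Tendsto (fun N : ℕ => ρ N) Filter.atTop (nhds 0) :=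
      (tendsto_rpow_neg_atTop hτ1).comp tendsto_natCast_atTop_atTop
    have h2 : Filter.Tendsto (fun N : ℕ => 2 * ρ N) Filter.atTop (nhds 0) := by
      simpa using h1.const_mul 2
    have := (ENNReal.continuous_ofReal.tendsto 0).comp h2
    simpa [hr_def, Function.comp_def] using this
  have ht_diam : ∀ᶠ N in Filter.atTop, ∀ i : ℕ × ℕ, EMetric.diam (t N i) ≤ r N := by
    filter_upwards [Filter.eventually_ge_atTop 1] with N hN i
    refine (hdiam N i).trans (ENNReal.ofReal_le_ofReal ?_)
    have : ρ (i.1 + N) ≤ ρ N := by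
      apply Real.rpow_le_rpow_of_nonpos
      · exact_mod_cast hN
      · exact_mod_cast Nat.le_add_left N i.1
      · linarith
    linarith
  -- covering
  have hst : ∀ᶠ N in Filter.atTop, A ⊆ ⋃ i : ℕ × ℕ, t N i := by
    apply Filter.Eventually.of_forall
    intro N x hx
    obtain ⟨⟨hx0, hx1⟩, hinf⟩ := hx
    obtain ⟨q, hqS, hqN⟩ := hinf.exists_gt N
    obtain ⟨hq0, hqx⟩ := hqS
    set y := (q:ℝ) * x with hy
    have hq0' : (0:ℝ) < q := by exact_mod_cast hq0
    have hy0 : 0 ≤ y := by positivity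
    have hy1 : y < q := by
      calc y < (q:ℝ) * 1 := by apply mul_lt_mul_of_pos_left hx1 hq0'
      _ = q := mul_one _
    have hround0 : 0 ≤ round y := by
      rw [round_eq]; exact Int.floor_nonneg.2 (by linarith)
    have habs := abs_sub_round y
    have habs' := abs_le.mp habs
    have hroundq : round y ≤ (q:ℤ) := by
      have h1 : (round y : ℝ) < (q:ℝ) + 1 := by linarith
      exact_mod_cast Int.lt_add_one_iff.mp (by exact_mod_cast h1)
    set p : ℕ := (round y).toNat with hp
    have hpcast : (p:ℝ) = round y := by
      rw [hp]; exact_mod_cast Int.toNat_of_nonneg hround0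
    have hpq : p ≤ q := by
      rw [hp]; exact_mod_cast Int.toNat_le.2 hroundq
    -- x is in the interval around p/q
    have hxmem : x ∈ Icc ((p:ℝ)/q - ρ q) ((p:ℝ)/q + ρ q) := by
      have hρq : ρ q = (q:ℝ) ^ (-τ) / q := by
        simp only [hρ]
        rw [show -(τ+1) = -τ + (-1) by ring, Real.rpow_add hq0', Real.rpow_neg_one]
        ring
      have hdist : |x - (p:ℝ)/q| < ρ q := by
        have h1 : |y - (p:ℝ)| < (q:ℝ)^(-τ) := by rw [hpcast]; exact hqx
        have h2 : y - (p:ℝ) = (q:ℝ) * (x - (p:ℝ)/q) := by rw [hy]; field_simp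
        rw [h2, abs_mul, abs_of_pos hq0'] at h1
        rw [hρq, lt_div_iff₀ hq0']
        linarith [h1]
      obtain ⟨hl, hr⟩ := abs_lt.mp hdist
      constructor <;> [linarith; linarith]
    refine mem_iUnion.2 ⟨(q - N, p), ?_⟩
    have hqN' : q - N + N = q := Nat.sub_add_cancel hqN.le
    simp only [ht_def, hqN']
    rw [if_pos ⟨hpq, hq0⟩]
    rwa [show ((q - N : ℕ):ℝ) + (N:ℝ) = (q:ℝ) by exact_mod_cast congrArg (Nat.cast (R := ℝ)) hqN'] 
  -- the bounding series
  set F : ℕ → ℝ := fun q => ((q:ℝ)+1) * (2 * ρ q) ^ s with hF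
  have hF_nonneg : ∀ q, 0 ≤ F q := by
    intro q
    apply mul_nonneg (by positivity)
    exact Real.rpow_nonneg (by linarith [hρ_nonneg q]) _
  have hF0 : F 0 = 0 := by
    have : ρ 0 = 0 := by
      simp only [hρ, Nat.cast_zero]
      exact Real.zero_rpow (by linarith)
    simp [hF, this, Real.zero_rpow hs0.ne']
  have hexp : 1 + -(τ+1) * s < -1 := by
    have h2 : 2 < s * (τ + 1) := (div_lt_iff₀ hτ1).mp hs
    nlinarith
  have hF_sum : Summable F := by
    apply Summable.of_nonneg_of_le hF_nonneg
      (f := fun q : ℕ => (2:ℝ)^s * 2 * (q:ℝ) ^ (1 + -(τ+1)*s))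
    · intro q
      rcases Nat.eq_zero_or_pos q with h | h
      · subst h
        rw [hF0]
        have h0 : ((0:ℕ):ℝ) ^ (1 + -(τ+1)*s) = 0 := by
          rw [Nat.cast_zero]; exact Real.zero_rpow (by linarith)
        rw [h0, mul_zero]
      · have hq0' : (0:ℝ) < q := by exact_mod_cast h
        have hsplit : (2 * ρ q) ^ s = 2 ^ s * (q:ℝ) ^ (-(τ+1)*s) := by
          rw [Real.mul_rpow (by norm_num) (hρ_nonneg q)]
          congr 1
          simp only [hρ]
          rw [← Real.rpow_mul hq0'.le]
        have hrhs : (2:ℝ)^s * 2 * (q:ℝ) ^ (1 + -(τ+1)*s)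
            = 2^s * (2 * (q:ℝ)) * (q:ℝ) ^ (-(τ+1)*s) := by
          rw [Real.rpow_add hq0', Real.rpow_one]; ring
        simp only [hF]
        rw [hsplit, hrhs]
        have h1q : (q:ℝ) + 1 ≤ 2 * q := by
          have : (1:ℝ) ≤ q := by exact_mod_cast h
          linarith
        have hpow_nonneg : (0:ℝ) ≤ (q:ℝ) ^ (-(τ+1)*s) := Real.rpow_nonneg hq0'.le _
        have h2s : (0:ℝ) ≤ 2^s := Real.rpow_nonneg (by norm_num) s
        calc ((q:ℝ)+1) * (2 ^ s * (q:ℝ) ^ (-(τ+1)*s))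
            ≤ (2*(q:ℝ)) * (2 ^ s * (q:ℝ) ^ (-(τ+1)*s)) := by
              apply mul_le_mul_of_nonneg_right h1q (by positivity)
          _ = 2^s * (2 * (q:ℝ)) * (q:ℝ) ^ (-(τ+1)*s) := by ring
    · exact (Real.summable_nat_rpow.mpr hexp).mul_left _
  -- the ENNReal series
  set g : ℕ → ℝ≥0∞ := fun q => ENNReal.ofReal (F q) with hg
  have hg_sum : ∑' q, g q ≠ ⊤ := by
    rw [hg, ← ENNReal.ofReal_tsum_of_nonneg hF_nonneg hF_sum]
    exact ENNReal.ofReal_ne_top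
  -- inner sum bound
  have hinner : ∀ N k : ℕ, (∑' p : ℕ, EMetric.diam (t N (k, p)) ^ s) ≤ g (k + N) := by
    intro N k
    set q := k + N with hq
    by_cases hq1 : 1 ≤ q
    · have hzero : ∀ p ∉ Finset.range (q+1), EMetric.diam (t N (k, p)) ^ s = 0 := by
        intro p hp
        rw [Finset.mem_range, Nat.lt_add_one_iff, not_le] at hp
        have : ¬ (p ≤ k + N ∧ 1 ≤ k + N) := by
          rw [← hq]; intro hcon; exact absurd hcon.1 (by omega)
        simp [ht_def, if_neg this, EMetric.diam, EMetric.diam_empty, ENNReal.zero_rpow_of_pos hs0]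
      rw [tsum_eq_sum hzero]
      have hterm : ∀ p ∈ Finset.range (q+1),
          EMetric.diam (t N (k, p)) ^ s ≤ ENNReal.ofReal ((2 * ρ q) ^ s) := by
        intro p hp
        have hd : EMetric.diam (t N (k, p)) ≤ ENNReal.ofReal (2 * ρ q) := by
          simpa [hq] using hdiam N (k, p)
        have h2ρ : 0 < 2 * ρ q := by linarith [hρ_pos q hq1]
        calc EMetric.diam (t N (k, p)) ^ s
            ≤ (ENNReal.ofReal (2 * ρ q)) ^ s := ENNReal.rpow_le_rpow hd hs0.le
          _ = ENNReal.ofReal ((2 * ρ q) ^ s) := ENNReal.ofReal_rpow_of_pos h2ρ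
      calc ∑ p ∈ Finset.range (q+1), EMetric.diam (t N (k, p)) ^ s
          ≤ ∑ _p ∈ Finset.range (q+1), ENNReal.ofReal ((2 * ρ q) ^ s) :=
            Finset.sum_le_sum hterm
        _ = (q+1 : ℕ) * ENNReal.ofReal ((2 * ρ q) ^ s) := by
            rw [Finset.sum_const, Finset.card_range, nsmul_eq_mul]
        _ = ENNReal.ofReal (((q:ℝ)+1) * (2 * ρ q) ^ s) := by
            rw [ENNReal.ofReal_mul (by positivity)]
            congr 1
            rw [← ENNReal.ofReal_natCast]
            congr 1
            push_cast; ring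
        _ = g (k + N) := by rw [hg, hF]
    · have hqe : q = 0 := by omega
      have : ∀ p : ℕ, EMetric.diam (t N (k, p)) ^ s = 0 := by
        intro p
        have : ¬ (p ≤ k + N ∧ 1 ≤ k + N) := by rw [← hq, hqe]; omega
        simp [ht_def, if_neg this, EMetric.diam, EMetric.diam_empty, ENNReal.zero_rpow_of_pos hs0]
      simp [this]
  -- tail bound
  have hf_le : ∀ N, (∑' i : ℕ × ℕ, EMetric.diam (t N i) ^ s) ≤ ∑' k, g (k + N) := by
    intro N
    rw [ENNReal.tsum_prod']
    exact ENNReal.tsum_le_tsum (fun k => hinner N k)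
  have htail : Filter.Tendsto (fun N => ∑' k, g (k + N)) Filter.atTop (nhds 0) :=
    ENNReal.tendsto_sum_nat_add g hg_sum
  have hmain := Measure.hausdorffMeasure_le_liminf_tsum s A r hr0 t ht_diam hst
  have hlim : Filter.liminf (fun N => ∑' i : ℕ × ℕ, EMetric.diam (t N i) ^ s)
      Filter.atTop = 0 := by
    apply le_antisymm _ zero_le
    calc Filter.liminf (fun N => ∑' i : ℕ × ℕ, EMetric.diam (t N i) ^ s) Filter.atTop
        ≤ Filter.liminf (fun N => ∑' k, g (k + N)) Filter.atTop :=
          Filter.liminf_le_liminf (Filter.Eventually.of_forall hf_le)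
      _ = 0 := htail.liminf_eq
  exact le_antisymm (hlim ▸ hmain) zero_le

theorem jarnik_besicovitch_upper (τ : ℝ) (hτ : 1 < τ) :
    (∀ s : ℝ, 2 / (τ + 1) < s →
      μH[s] {x : ℝ | x ∈ Ico (0:ℝ) 1 ∧
        {q : ℕ | 0 < q ∧
          |(q : ℝ) * x - round ((q : ℝ) * x)| < (q : ℝ) ^ (-τ)}.Infinite} = 0) ∧
    dimH {x : ℝ | x ∈ Ico (0:ℝ) 1 ∧
        {q : ℕ | 0 < q ∧
          |(q : ℝ) * x - round ((q : ℝ) * x)| < (q : ℝ) ^ (-τ)}.Infinite} ≤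
      ENNReal.ofReal (2 / (τ + 1)) := by
  have hμ := jb_aux τ hτ
  refine ⟨hμ, ?_⟩
  apply dimH_le
  intro d hd
  by_contra hlt
  push_neg at hlt
  have hτ1 : (0:ℝ) < 2 / (τ + 1) := by positivity
  have hd' : 2 / (τ + 1) < (d : ℝ) := by
    by_contra hle
    push_neg at hle
    have : (↑d : ℝ≥0∞) ≤ ENNReal.ofReal (2 / (τ + 1)) := by
      rw [← ENNReal.ofReal_coe_nnreal]
      exact ENNReal.ofReal_le_ofReal hle
    exact absurd this hlt.not_ge
  exact absurd (hμ d hd') (by rw [hd]; exact ENNReal.top_ne_zero)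
end
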